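/- Let P be a set of point trajectories satisfying the pseudo-algebraic and general position assumptions. Let (pq, r, I) and (pa, r, J) be single Delaunay crossings that are both clockwise (p,r)-crossings (i.e., r crosses segment pq from L⁻_pq to L⁺_pq during I and crosses segment pa from L⁻_pa to L⁺_pa during J), and suppose the (unique) time in I at which r lies on segment pq precedes the (unique) time in J at which r lies on segment pa. Then I begins before J begins, and I ends before J ends. The analogous statement holds for pairs of counterclockwise crossings of edges sharing their second endpoint. -/

import Mathlib

/-!
Kinetic Delaunay triangulations of points moving in the plane:
common definitions (trajectories, Delaunay edges, co-circularity and
collinearity events, general position assumptions, Delaunay crossings).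
-/

noncomputable section

attribute [local instance] Classical.propDecidable

/-- The Euclidean plane. -/
abbrev Plane : Type := EuclideanSpace ℝ (Fin 2)

/-- A point trajectory: a moving point in the plane, parametrized by time. -/
abbrev Traj : Type := ℝ → Plane

/-- Signed orientation of `x` with respect to the line through `a` and `b`,
oriented from `a` to `b`; positive iff `x` lies in the open left halfplane `L⁻`. -/
def orient (a b x : Plane) : ℝ :=
  (b 0 - a 0) * (x 1 - a 1) - (b 1 - a 1) * (x 0 - a 0)

/-- `x` lies in the open left halfplane `L⁻` of the line oriented from `a` to `b`. -/
def leftOf (a b x : Plane) : Prop := 0 < orient a b x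

/-- `x` lies in the open right halfplane `L⁺` of the line oriented from `a` to `b`. -/
def rightOf (a b x : Plane) : Prop := orient a b x < 0

/-- `x` and `y` lie strictly on opposite sides of the line through `a` and `b`. -/
def OppositeSides (a b x y : Plane) : Prop := orient a b x * orient a b y < 0

/-- Four points of the plane are concyclic. -/
def Concyclic4 (a b c d : Plane) : Prop :=
  ∃ (o : Plane) (ρ : ℝ), 0 < ρ ∧
    dist a o = ρ ∧ dist b o = ρ ∧ dist c o = ρ ∧ dist d o = ρ

/-- Five points of the plane are concyclic. -/
def Concyclic5 (a b c d e : Plane) : Prop :=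
  ∃ (o : Plane) (ρ : ℝ), 0 < ρ ∧
    dist a o = ρ ∧ dist b o = ρ ∧ dist c o = ρ ∧ dist d o = ρ ∧ dist e o = ρ

/-- `x` lies in the open circumdisc of `a`, `b`, `c` (for non-collinear `a`, `b`, `c`
the circle through them is unique, so this is the usual notion). -/
def InCircumdisc (a b c x : Plane) : Prop :=
  ∃ (o : Plane) (ρ : ℝ), dist a o = ρ ∧ dist b o = ρ ∧ dist c o = ρ ∧ dist x o < ρ

/-- `x` lies strictly outside the circumdisc of `a`, `b`, `c`. -/
def OutCircumdisc (a b c x : Plane) : Prop :=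
  ∃ (o : Plane) (ρ : ℝ), dist a o = ρ ∧ dist b o = ρ ∧ dist c o = ρ ∧ ρ < dist x o

/-- The edge `pq` is Delaunay at time `t` with respect to the set `Q` of trajectories:
there is a closed disc whose boundary circle passes through `p t` and `q t` and whose
interior contains no point of `Q` at time `t`. -/
def DelaunayEdge (Q : Finset Traj) (p q : Traj) (t : ℝ) : Prop :=
  ∃ (o : Plane) (ρ : ℝ), dist (p t) o = ρ ∧ dist (q t) o = ρ ∧
    ∀ x ∈ Q, ¬ dist (x t) o < ρ

/-- The four moving points `p, q, a, b` are concyclic at time `t`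
(a co-circularity event). -/
def CocircAt (p q a b : Traj) (t : ℝ) : Prop :=
  Concyclic4 (p t) (q t) (a t) (b t)

/-- The three moving points `p, q, r` are collinear at time `t`
(a collinearity event). -/
def CollinAt (p q r : Traj) (t : ℝ) : Prop :=
  Collinear ℝ ({p t, q t, r t} : Set Plane)

/-- Pairwise distinctness of four trajectories. -/
def Distinct4 (p q a b : Traj) : Prop :=
  p ≠ q ∧ p ≠ a ∧ p ≠ b ∧ q ≠ a ∧ q ≠ b ∧ a ≠ b

/-- Pairwise distinctness of three trajectories. -/
def Distinct3 (p q r : Traj) : Prop := p ≠ q ∧ p ≠ r ∧ q ≠ r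

/-- The Delaunayhood of the edge `xy` is violated by the pair `u`, `v` at time `t`:
`u t` and `v t` lie strictly on opposite sides of the line through `x t` and `y t`,
and `v t` lies in the open circumdisc of `x t`, `y t`, `u t`. -/
def ViolatedBy (x y u v : Traj) (t : ℝ) : Prop :=
  OppositeSides (x t) (y t) (u t) (v t) ∧ InCircumdisc (x t) (y t) (u t) (v t)

/-- General position assumptions on a finite set of moving points: the motions are
continuous, no two points ever coincide, no five points are ever concyclic, no four
are ever collinear, no two co-circularity or collinearity events occur simultaneously
and, at each such event, the involved point crosses the relevant circle or line
transversally. -/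
structure GenPos (P : Finset Traj) : Prop where
  cont : ∀ p ∈ P, Continuous p
  never_coincide : ∀ p ∈ P, ∀ q ∈ P, p ≠ q → ∀ t : ℝ, p t ≠ q t
  no_five_cocirc : ∀ t : ℝ, ∀ p ∈ P, ∀ q ∈ P, ∀ a ∈ P, ∀ b ∈ P, ∀ e ∈ P,
    Distinct4 p q a b → p ≠ e → q ≠ e → a ≠ e → b ≠ e →
    ¬ Concyclic5 (p t) (q t) (a t) (b t) (e t)
  no_four_collin : ∀ t : ℝ, ∀ p ∈ P, ∀ q ∈ P, ∀ a ∈ P, ∀ b ∈ P,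
    Distinct4 p q a b → ¬ Collinear ℝ ({p t, q t, a t, b t} : Set Plane)
  unique_cocirc : ∀ t : ℝ, ∀ p ∈ P, ∀ q ∈ P, ∀ a ∈ P, ∀ b ∈ P,
    ∀ p' ∈ P, ∀ q' ∈ P, ∀ a' ∈ P, ∀ b' ∈ P,
    Distinct4 p q a b → Distinct4 p' q' a' b' →
    CocircAt p q a b t → CocircAt p' q' a' b' t →
    ({p, q, a, b} : Set Traj) = ({p', q', a', b'} : Set Traj)
  unique_collin : ∀ t : ℝ, ∀ p ∈ P, ∀ q ∈ P, ∀ r ∈ P, ∀ p' ∈ P, ∀ q' ∈ P, ∀ r' ∈ P,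
    Distinct3 p q r → Distinct3 p' q' r' →
    CollinAt p q r t → CollinAt p' q' r' t →
    ({p, q, r} : Set Traj) = ({p', q', r'} : Set Traj)
  cocirc_collin_separate : ∀ t : ℝ, ∀ p ∈ P, ∀ q ∈ P, ∀ a ∈ P, ∀ b ∈ P,
    ∀ p' ∈ P, ∀ q' ∈ P, ∀ r' ∈ P,
    Distinct4 p q a b → Distinct3 p' q' r' →
    CocircAt p q a b t → ¬ CollinAt p' q' r' t
  circle_transversal : ∀ p ∈ P, ∀ q ∈ P, ∀ a ∈ P, ∀ b ∈ P, Distinct4 p q a b →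
    ∀ t : ℝ, CocircAt p q a b t →
    ∃ δ > (0 : ℝ),
      ((∀ u ∈ Set.Ioo (t - δ) t, InCircumdisc (p u) (q u) (a u) (b u)) ∧
        (∀ u ∈ Set.Ioo t (t + δ), OutCircumdisc (p u) (q u) (a u) (b u))) ∨
      ((∀ u ∈ Set.Ioo (t - δ) t, OutCircumdisc (p u) (q u) (a u) (b u)) ∧
        (∀ u ∈ Set.Ioo t (t + δ), InCircumdisc (p u) (q u) (a u) (b u)))
  line_transversal : ∀ p ∈ P, ∀ q ∈ P, ∀ r ∈ P, Distinct3 p q r →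
    ∀ t : ℝ, CollinAt p q r t →
    ∃ δ > (0 : ℝ),
      ((∀ u ∈ Set.Ioo (t - δ) t, leftOf (p u) (q u) (r u)) ∧
        (∀ u ∈ Set.Ioo t (t + δ), rightOf (p u) (q u) (r u))) ∨
      ((∀ u ∈ Set.Ioo (t - δ) t, rightOf (p u) (q u) (r u)) ∧
        (∀ u ∈ Set.Ioo t (t + δ), leftOf (p u) (q u) (r u)))

/-- Pseudo-algebraicity: any four points of `P` are concyclic at most `s` times. -/
def CocircBound (P : Finset Traj) (s : ℕ) : Prop :=
  ∀ p ∈ P, ∀ q ∈ P, ∀ a ∈ P, ∀ b ∈ P, Distinct4 p q a b →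
    {t : ℝ | CocircAt p q a b t}.encard ≤ (s : ℕ∞)

/-- Pseudo-algebraicity: any three points of `P` are collinear at most `c` times. -/
def CollinBound (P : Finset Traj) (c : ℕ) : Prop :=
  ∀ p ∈ P, ∀ q ∈ P, ∀ r ∈ P, Distinct3 p q r →
    {t : ℝ | CollinAt p q r t}.encard ≤ (c : ℕ∞)

/-- A Delaunay co-circularity event of `P` occurs at time `t`: some four (distinct)
points of `P` are concyclic at time `t`, and the open disc bounded by their common
circle contains no point of `P` at time `t`. -/
def DelaunayCocircAt (P : Finset Traj) (t : ℝ) : Prop :=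
  ∃ p ∈ P, ∃ q ∈ P, ∃ a ∈ P, ∃ b ∈ P, Distinct4 p q a b ∧
    ∃ (o : Plane) (ρ : ℝ), 0 < ρ ∧
      dist (p t) o = ρ ∧ dist (q t) o = ρ ∧ dist (a t) o = ρ ∧ dist (b t) o = ρ ∧
      ∀ x ∈ P, ¬ dist (x t) o < ρ

/-- A `k`-shallow co-circularity of `p, q, a, b` at time `t`: the four points are
concyclic and the open disc bounded by their common circle contains at most `k`
points of `P` at time `t`. -/
def ShallowCocircAt (P : Finset Traj) (k : ℕ) (p q a b : Traj) (t : ℝ) : Prop :=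
  ∃ (o : Plane) (ρ : ℝ), 0 < ρ ∧
    dist (p t) o = ρ ∧ dist (q t) o = ρ ∧ dist (a t) o = ρ ∧ dist (b t) o = ρ ∧
    {x : Traj | x ∈ P ∧ dist (x t) o < ρ}.ncard ≤ k

/-- A `k`-shallow collinearity of `p, q, r` at time `t`: the three points are
collinear and one of the two open halfplanes bounded by the line through them
contains at most `k` points of `P` at time `t`. -/
def ShallowCollinAt (P : Finset Traj) (k : ℕ) (p q r : Traj) (t : ℝ) : Prop :=
  CollinAt p q r t ∧ p t ≠ q t ∧
    ({x : Traj | x ∈ P ∧ leftOf (p t) (q t) (x t)}.ncard ≤ k ∨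
      {x : Traj | x ∈ P ∧ rightOf (p t) (q t) (x t)}.ncard ≤ k)

/-- At time `t`, the point `r` lies on the segment `pq` and crosses it transversally
from the open halfplane `L⁻` (left of the oriented line `pq`) to `L⁺`. -/
def CrossesMinusPlus (p q r : Traj) (t : ℝ) : Prop :=
  r t ∈ segment ℝ (p t) (q t) ∧
    ∃ δ > (0 : ℝ),
      (∀ u ∈ Set.Ioo (t - δ) t, leftOf (p u) (q u) (r u)) ∧
      (∀ u ∈ Set.Ioo t (t + δ), rightOf (p u) (q u) (r u))

/-- At time `t`, the point `r` lies on the segment `pq` and crosses it transversally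
from `L⁺` to `L⁻`. -/
def CrossesPlusMinus (p q r : Traj) (t : ℝ) : Prop :=
  r t ∈ segment ℝ (p t) (q t) ∧
    ∃ δ > (0 : ℝ),
      (∀ u ∈ Set.Ioo (t - δ) t, rightOf (p u) (q u) (r u)) ∧
      (∀ u ∈ Set.Ioo t (t + δ), leftOf (p u) (q u) (r u))

/-- A Delaunay crossing `(pq, r, [t₀, t₁])`: the edge `pq` is Delaunay with respect
to `P` at times `t₀` and `t₁` but at no time in `(t₀, t₁)`; `r` lies on the closed
segment `pq` at least once during `[t₀, t₁]`; and `pq` is Delaunay with respect to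
`P ∖ {r}` throughout `[t₀, t₁]`. -/
structure DelaunayCrossing (P : Finset Traj) (p q r : Traj) (t₀ t₁ : ℝ) : Prop where
  lt : t₀ < t₁
  mem_p : p ∈ P
  mem_q : q ∈ P
  mem_r : r ∈ P
  distinct : Distinct3 p q r
  del_start : DelaunayEdge P p q t₀
  del_end : DelaunayEdge P p q t₁
  not_del : ∀ t ∈ Set.Ioo t₀ t₁, ¬ DelaunayEdge P p q t
  hits : ∃ t ∈ Set.Icc t₀ t₁, r t ∈ segment ℝ (p t) (q t)
  del_erase : ∀ t ∈ Set.Icc t₀ t₁, DelaunayEdge (P.erase r) p q t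

/-- A single Delaunay crossing, with the convention that `r` crosses the segment
`pq` from `L⁻` to `L⁺`: a Delaunay crossing in which `r` lies on the segment `pq`
at exactly one time of `[t₀, t₁]`, where it crosses from `L⁻` to `L⁺`.
(It is a clockwise `(p, r)`-crossing and a counterclockwise `(q, r)`-crossing.) -/
structure SingleCrossing (P : Finset Traj) (p q r : Traj) (t₀ t₁ : ℝ) : Prop where
  crossing : DelaunayCrossing P p q r t₀ t₁
  unique_hit : ∀ t ∈ Set.Icc t₀ t₁, ∀ t' ∈ Set.Icc t₀ t₁,
    r t ∈ segment ℝ (p t) (q t) → r t' ∈ segment ℝ (p t') (q t') → t = t'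
  dir : ∀ t ∈ Set.Icc t₀ t₁, r t ∈ segment ℝ (p t) (q t) → CrossesMinusPlus p q r t

/-- A double Delaunay crossing: a Delaunay crossing in which `r` lies on the
segment `pq` at exactly two times of `[t₀, t₁]`. -/
structure DoubleCrossing (P : Finset Traj) (p q r : Traj) (t₀ t₁ : ℝ) : Prop where
  crossing : DelaunayCrossing P p q r t₀ t₁
  two_hits : ∃ u v : ℝ, u ∈ Set.Icc t₀ t₁ ∧ v ∈ Set.Icc t₀ t₁ ∧ u ≠ v ∧
    r u ∈ segment ℝ (p u) (q u) ∧ r v ∈ segment ℝ (p v) (q v) ∧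
    ∀ t ∈ Set.Icc t₀ t₁, r t ∈ segment ℝ (p t) (q t) → t = u ∨ t = v

/-- The point `s` enters the cap `B[p,q,r] ∩ L⁺_pq` at time `t`: just before `t` it
lies strictly outside the circumdisc `B[p,q,r]`, and just after `t` it lies inside
`B[p,q,r]` and in the open right halfplane `L⁺` of the oriented line `pq`. -/
def EntersCapPlus (p q r s : Traj) (t : ℝ) : Prop :=
  ∃ δ > (0 : ℝ),
    (∀ u ∈ Set.Ioo (t - δ) t, OutCircumdisc (p u) (q u) (r u) (s u)) ∧
    (∀ u ∈ Set.Ioo t (t + δ),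
      InCircumdisc (p u) (q u) (r u) (s u) ∧ rightOf (p u) (q u) (s u))

/-- The point `s` leaves the cap `B[p,q,r] ∩ L⁻_pq` at time `t`: just before `t` it
lies inside the circumdisc `B[p,q,r]` and in the open left halfplane `L⁻` of the
oriented line `pq`, and just after `t` it lies strictly outside `B[p,q,r]`. -/
def LeavesCapMinus (p q r s : Traj) (t : ℝ) : Prop :=
  ∃ δ > (0 : ℝ),
    (∀ u ∈ Set.Ioo (t - δ) t,
      InCircumdisc (p u) (q u) (r u) (s u) ∧ leftOf (p u) (q u) (s u)) ∧
    (∀ u ∈ Set.Ioo t (t + δ), OutCircumdisc (p u) (q u) (r u) (s u))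



/-! ### Auxiliary development for Statement 6 -/

namespace S6

/-! basic plane coordinate algebra -/

lemma plane_ext {x y : Plane} (h0 : x 0 = y 0) (h1 : x 1 = y 1) : x = y := by
  ext i; fin_cases i <;> assumption

def d2 (x y : Plane) : ℝ := (x 0 - y 0)^2 + (x 1 - y 1)^2

lemma d2_nonneg (x y : Plane) : 0 ≤ d2 x y := by
  simp only [d2]; positivity

lemma eq_of_d2_eq_zero {x y : Plane} (h : d2 x y = 0) : x = y := by
  simp only [d2] at h
  have h0 : x 0 = y 0 := by nlinarith [sq_nonneg (x 0 - y 0), sq_nonneg (x 1 - y 1)]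
  have h1 : x 1 = y 1 := by nlinarith [sq_nonneg (x 0 - y 0), sq_nonneg (x 1 - y 1)]
  exact plane_ext h0 h1

lemma d2_pos {x y : Plane} (h : x ≠ y) : 0 < d2 x y := by
  rcases lt_or_eq_of_le (d2_nonneg x y) with h' | h'
  · exact h'
  · exact absurd (eq_of_d2_eq_zero h'.symm) h

lemma dist_eq_sqrt_d2 (x y : Plane) : dist x y = Real.sqrt (d2 x y) := by
  rw [EuclideanSpace.dist_eq]
  congr 1
  simp [Fin.sum_univ_two, d2, Real.dist_eq, sq_abs]

lemma d2_eq_dist_sq (x y : Plane) : d2 x y = dist x y ^ 2 := by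
  rw [dist_eq_sqrt_d2, Real.sq_sqrt (d2_nonneg x y)]

lemma delaunay_d2 {Q : Finset Traj} {a b : Traj} {t : ℝ} (h : DelaunayEdge Q a b t)
    (hne : a t ≠ b t) :
    ∃ (o : Plane) (ρ2 : ℝ), 0 < ρ2 ∧ d2 (a t) o = ρ2 ∧ d2 (b t) o = ρ2 ∧
      ∀ x ∈ Q, ρ2 ≤ d2 (x t) o := by
  obtain ⟨o, ρ, ha, hb, hemp⟩ := h
  have hρ : 0 ≤ ρ := ha ▸ dist_nonneg
  refine ⟨o, ρ^2, ?_, by rw [d2_eq_dist_sq, ha], by rw [d2_eq_dist_sq, hb], ?_⟩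
  · rcases lt_or_eq_of_le (sq_nonneg ρ) with h' | h'
    · exact h'
    · exfalso
      have hρ0 : ρ = 0 := by nlinarith
      apply hne
      have h1 : a t = o := eq_of_d2_eq_zero (by rw [d2_eq_dist_sq, ha, hρ0]; norm_num)
      have h2 : b t = o := eq_of_d2_eq_zero (by rw [d2_eq_dist_sq, hb, hρ0]; norm_num)
      rw [h1, h2]
  · intro x hx
    have := hemp x hx
    rw [d2_eq_dist_sq]
    have hd : ρ ≤ dist (x t) o := not_lt.1 this
    nlinarith [dist_nonneg (x := x t) (y := o)]

lemma delaunay_mk {Q : Finset Traj} {a b : Traj} {t : ℝ} (o : Plane) (ρ2 : ℝ)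
    (hρ2 : 0 ≤ ρ2) (ha : d2 (a t) o = ρ2) (hb : d2 (b t) o = ρ2)
    (hemp : ∀ x ∈ Q, ¬ d2 (x t) o < ρ2) : DelaunayEdge Q a b t := by
  refine ⟨o, Real.sqrt ρ2, by rw [dist_eq_sqrt_d2, ha], by rw [dist_eq_sqrt_d2, hb], ?_⟩
  intro x hx hlt
  apply hemp x hx
  rw [dist_eq_sqrt_d2] at hlt
  by_contra hge
  exact absurd (Real.sqrt_le_sqrt (not_lt.1 hge)) (not_le.2 hlt)

lemma conc5_mk {a b c d e o : Plane} {ρ2 : ℝ} (hρ2 : 0 < ρ2)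
    (ha : d2 a o = ρ2) (hb : d2 b o = ρ2) (hc : d2 c o = ρ2) (hd : d2 d o = ρ2)
    (he : d2 e o = ρ2) : Concyclic5 a b c d e := by
  refine ⟨o, Real.sqrt ρ2, Real.sqrt_pos.2 hρ2, ?_, ?_, ?_, ?_, ?_⟩ <;>
    rw [dist_eq_sqrt_d2] <;> congr 1

/-! the incircle determinant -/

def icd (p q a r : Plane) : ℝ :=
  (q 0 - p 0) * ((a 1 - p 1) * d2 r p - (r 1 - p 1) * d2 a p)
  - (q 1 - p 1) * ((a 0 - p 0) * d2 r p - (r 0 - p 0) * d2 a p)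
  + d2 q p * ((a 0 - p 0) * (r 1 - p 1) - (a 1 - p 1) * (r 0 - p 0))

lemma orient_swap (a b x : Plane) : orient a x b = - orient a b x := by
  simp only [orient]; ring

lemma icd_swap23 (p q a r : Plane) : icd p q r a = - icd p q a r := by
  simp only [icd, d2]; ring

lemma icd_cyc (p q a r : Plane) : icd p a r q = icd p q a r := by
  simp only [icd, d2]; ring

lemma orient_comb (p c b x : Plane) (s : ℝ)
    (e0 : x 0 = p 0 + s * (b 0 - p 0)) (e1 : x 1 = p 1 + s * (b 1 - p 1)) :
    orient p c x = s * orient p c b := by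
  simp only [orient]; rw [e0, e1]; ring

lemma icd_param1 (p q a x : Plane) (s : ℝ)
    (e0 : x 0 = p 0 + s * (q 0 - p 0)) (e1 : x 1 = p 1 + s * (q 1 - p 1)) :
    icd p q a x = s * (s - 1) * d2 q p * orient p q a := by
  simp only [icd, d2, orient]; rw [e0, e1]; ring

lemma icd_param2 (p q a x : Plane) (s : ℝ)
    (e0 : x 0 = p 0 + s * (a 0 - p 0)) (e1 : x 1 = p 1 + s * (a 1 - p 1)) :
    icd p q a x = s * (s - 1) * d2 a p * orient p q a := by
  simp only [icd, d2, orient]; rw [e0, e1]; ring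

/-! chord and pencil lemmas -/

lemma chord {p q x o : Plane} {ρ2 s : ℝ} (hp : d2 p o = ρ2) (hq : d2 q o = ρ2)
    (h0 : x 0 = p 0 + s * (q 0 - p 0)) (h1 : x 1 = p 1 + s * (q 1 - p 1)) :
    d2 x o = ρ2 + s * (s - 1) * d2 q p := by
  simp only [d2] at *
  rw [h0, h1]
  linear_combination (1 - s) * hp + s * hq

lemma pencil (p q x y o1 o2 : Plane) (R1 R2 : ℝ)
    (hp1 : d2 p o1 = R1) (hq1 : d2 q o1 = R1) (hp2 : d2 p o2 = R2) (hq2 : d2 q o2 = R2) :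
    ((d2 x o1 - R1) - (d2 x o2 - R2)) * orient p q y
      = ((d2 y o1 - R1) - (d2 y o2 - R2)) * orient p q x := by
  simp only [d2, orient] at *
  linear_combination (((q 0 - p 0) * (y 1 - p 1) - (q 1 - p 1) * (y 0 - p 0))
      - ((q 0 - p 0) * (x 1 - p 1) - (q 1 - p 1) * (x 0 - p 0))
      - ((x 0 - p 0) * (y 1 - p 1) - (x 1 - p 1) * (y 0 - p 0))) * (hp1 - hp2)
    + ((x 0 - p 0) * (y 1 - p 1) - (x 1 - p 1) * (y 0 - p 0)) * (hq1 - hq2)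

/-! circumcenter -/

def cc (p q r : Plane) : Plane := WithLp.toLp 2 fun i : Fin 2 =>
  if i = 0 then
    p 0 + (d2 q p * (r 1 - p 1) - d2 r p * (q 1 - p 1)) / (2 * orient p q r)
  else
    p 1 + (d2 r p * (q 0 - p 0) - d2 q p * (r 0 - p 0)) / (2 * orient p q r)

lemma cc0 (p q r : Plane) : cc p q r 0
    = p 0 + (d2 q p * (r 1 - p 1) - d2 r p * (q 1 - p 1)) / (2 * orient p q r) := rfl

lemma cc1 (p q r : Plane) : cc p q r 1
    = p 1 + (d2 r p * (q 0 - p 0) - d2 q p * (r 0 - p 0)) / (2 * orient p q r) := by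
  unfold cc
  norm_num

def rad2 (p q r : Plane) : ℝ := d2 p (cc p q r)

lemma cc_p (p q r : Plane) : d2 p (cc p q r) = rad2 p q r := rfl

lemma cc_q (p q r : Plane) (hg : orient p q r ≠ 0) : d2 q (cc p q r) = rad2 p q r := by
  simp only [rad2, d2, cc0, cc1, orient] at *
  field_simp
  ring

lemma cc_r (p q r : Plane) (hg : orient p q r ≠ 0) : d2 r (cc p q r) = rad2 p q r := by
  simp only [rad2, d2, cc0, cc1, orient] at *
  field_simp
  ring

lemma cc_pow (p q r x : Plane) (hg : orient p q r ≠ 0) :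
    orient p q r * (d2 x (cc p q r) - rad2 p q r) = icd p q r x := by
  simp only [rad2, d2, cc0, cc1, orient, icd] at *
  field_simp
  ring

lemma cc_unique {p q r o : Plane} {w : ℝ} (hg : orient p q r ≠ 0)
    (hp : d2 p o = w) (hq : d2 q o = w) (hr : d2 r o = w) :
    o = cc p q r := by
  have e1 : d2 p o - d2 q o = 0 := by rw [hp, hq]; ring
  have e2 : d2 p o - d2 r o = 0 := by rw [hp, hr]; ring
  have h0 : o 0 = cc p q r 0 := by
    rw [cc0]
    simp only [d2, orient] at *
    field_simp
    linear_combination (r 1 - p 1) * e1 - (q 1 - p 1) * e2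
  have h1 : o 1 = cc p q r 1 := by
    rw [cc1]
    simp only [d2, orient] at *
    rw [← sub_eq_iff_eq_add', eq_div_iff (mul_ne_zero two_ne_zero hg)]
    linear_combination (q 0 - p 0) * e2 - (r 0 - p 0) * e1
  exact plane_ext h0 h1

/-! segments, collinearity -/

lemma comb0 (p q : Plane) (s : ℝ) : (p + s • (q - p)) 0 = p 0 + s * (q 0 - p 0) := by
  simp [PiLp.add_apply, PiLp.smul_apply, PiLp.sub_apply]
lemma comb1 (p q : Plane) (s : ℝ) : (p + s • (q - p)) 1 = p 1 + s * (q 1 - p 1) := by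
  simp [PiLp.add_apply, PiLp.smul_apply, PiLp.sub_apply]

lemma seg_strict {p q x : Plane} (hx : x ∈ segment ℝ p q) (hxp : x ≠ p) (hxq : x ≠ q) :
    ∃ s : ℝ, 0 < s ∧ s < 1 ∧ x 0 = p 0 + s * (q 0 - p 0) ∧ x 1 = p 1 + s * (q 1 - p 1) := by
  rw [segment_eq_image'] at hx
  obtain ⟨s, hs, rfl⟩ := hx
  refine ⟨s, ?_, ?_, comb0 p q s, comb1 p q s⟩
  · rcases lt_or_eq_of_le hs.1 with h | h
    · exact h
    · exfalso; apply hxp; rw [← h]; simp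
  · rcases lt_or_eq_of_le hs.2 with h | h
    · exact h
    · exfalso; apply hxq; rw [h]
      apply plane_ext <;> simp [comb0, comb1]

lemma seg_of_param {p q x : Plane} (s : ℝ) (h0 : 0 ≤ s) (h1 : s ≤ 1)
    (e0 : x 0 = p 0 + s * (q 0 - p 0)) (e1 : x 1 = p 1 + s * (q 1 - p 1)) :
    x ∈ segment ℝ p q := by
  rw [segment_eq_image']
  refine ⟨s, ⟨h0, h1⟩, ?_⟩
  show p + s • (q - p) = x
  exact plane_ext (by rw [comb0, e0]) (by rw [comb1, e1])

lemma orient_param {p q x : Plane} (hne : p ≠ q) (h : orient p q x = 0) :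
    ∃ s : ℝ, x 0 = p 0 + s * (q 0 - p 0) ∧ x 1 = p 1 + s * (q 1 - p 1) := by
  have hne' : q 0 - p 0 ≠ 0 ∨ q 1 - p 1 ≠ 0 := by
    by_contra hc
    push_neg at hc
    apply hne
    ext i; fin_cases i <;> simp <;> linarith [hc.1, hc.2]
  simp only [orient] at h
  rcases hne' with h0 | h1
  · exact ⟨(x 0 - p 0) / (q 0 - p 0), by field_simp; ring, by field_simp; linear_combination h⟩
  · exact ⟨(x 1 - p 1) / (q 1 - p 1), by field_simp; linear_combination -h, by field_simp; ring⟩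

lemma collinear4 {p b x y : Plane} (hpb : p ≠ b) (hx : orient p b x = 0)
    (hy : orient p b y = 0) : Collinear ℝ ({p, b, x, y} : Set Plane) := by
  rw [collinear_iff_of_mem (Set.mem_insert p _)]
  refine ⟨b - p, ?_⟩
  obtain ⟨sx, ex0, ex1⟩ := orient_param hpb hx
  obtain ⟨sy, ey0, ey1⟩ := orient_param hpb hy
  intro z hz
  rcases hz with rfl | rfl | rfl | rfl
  · exact ⟨0, by simp⟩
  · exact ⟨1, by apply plane_ext <;> simp [PiLp.add_apply, PiLp.smul_apply, PiLp.sub_apply]⟩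
  · exact ⟨sx, by apply plane_ext <;>
      simp [PiLp.add_apply, PiLp.smul_apply, PiLp.sub_apply] <;> [rw [ex0]; rw [ex1]] <;> ring⟩
  · exact ⟨sy, by apply plane_ext <;>
      simp [PiLp.add_apply, PiLp.smul_apply, PiLp.sub_apply] <;> [rw [ey0]; rw [ey1]] <;> ring⟩

/-! continuity -/

lemma cont_coord {f : Traj} (hf : Continuous f) (i : Fin 2) :
    Continuous fun t => f t i := (continuous_apply i).comp ((PiLp.continuous_ofLp 2 _).comp hf)

lemma cont_d2 {f g : Traj} (hf : Continuous f) (hg : Continuous g) :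
    Continuous fun t => d2 (f t) (g t) := by
  unfold d2
  exact (((cont_coord hf 0).sub (cont_coord hg 0)).pow 2).add
    (((cont_coord hf 1).sub (cont_coord hg 1)).pow 2)

lemma cont_orient {f g h : Traj} (hf : Continuous f) (hg : Continuous g) (hh : Continuous h) :
    Continuous fun t => orient (f t) (g t) (h t) := by
  unfold orient
  exact (((cont_coord hg 0).sub (cont_coord hf 0)).mul
      ((cont_coord hh 1).sub (cont_coord hf 1))).sub
    (((cont_coord hg 1).sub (cont_coord hf 1)).mul
      ((cont_coord hh 0).sub (cont_coord hf 0)))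

lemma cont_icd {f g h k : Traj} (hf : Continuous f) (hg : Continuous g) (hh : Continuous h)
    (hk : Continuous k) : Continuous fun t => icd (f t) (g t) (h t) (k t) := by
  unfold icd
  have d1 := cont_d2 hk hf
  have d2' := cont_d2 hh hf
  have d3 := cont_d2 hg hf
  exact ((((cont_coord hg 0).sub (cont_coord hf 0)).mul
      ((((cont_coord hh 1).sub (cont_coord hf 1)).mul d1).sub
        (((cont_coord hk 1).sub (cont_coord hf 1)).mul d2'))).sub
    (((cont_coord hg 1).sub (cont_coord hf 1)).mul
      ((((cont_coord hh 0).sub (cont_coord hf 0)).mul d1).sub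
        (((cont_coord hk 0).sub (cont_coord hf 0)).mul d2')))).add
    (d3.mul ((((cont_coord hh 0).sub (cont_coord hf 0)).mul
        ((cont_coord hk 1).sub (cont_coord hf 1))).sub
      (((cont_coord hh 1).sub (cont_coord hf 1)).mul
        ((cont_coord hk 0).sub (cont_coord hf 0)))))

/-! filter and IVT helpers -/

open Filter Topology Set

lemma le_right_endpoint {f : ℝ → ℝ} (hf : Continuous f) {a b : ℝ} (hab : a < b)
    (h : ∀ t ∈ Set.Ioo a b, f t ≤ 0) : f b ≤ 0 := by
  have ht : Filter.Tendsto f (nhdsWithin b (Set.Iio b)) (nhds (f b)) :=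
    hf.continuousAt.continuousWithinAt
  refine le_of_tendsto ht ?_
  filter_upwards [Ioo_mem_nhdsLT_of_mem (Set.mem_Ioc.2 ⟨hab, le_rfl⟩)] with t ht
  exact h t ht

lemma le_left_endpoint {f : ℝ → ℝ} (hf : Continuous f) {a b : ℝ} (hab : a < b)
    (h : ∀ t ∈ Set.Ioo a b, f t ≤ 0) : f a ≤ 0 := by
  have ht : Filter.Tendsto f (nhdsWithin a (Set.Ioi a)) (nhds (f a)) :=
    hf.continuousAt.continuousWithinAt
  refine le_of_tendsto ht ?_
  filter_upwards [Ioo_mem_nhdsGT_of_mem (Set.mem_Ico.2 ⟨le_rfl, hab⟩)] with t ht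
  exact h t ht

lemma exists_near_left {a b : ℝ} (hab : a < b) {Q : ℝ → Prop} (h : ∀ᶠ t in nhds b, Q t) :
    ∃ t ∈ Set.Ioo a b, Q t := by
  have h2 : ∀ᶠ t in nhdsWithin b (Set.Iio b), Q t := h.filter_mono nhdsWithin_le_nhds
  have h3 : ∀ᶠ t in nhdsWithin b (Set.Iio b), t ∈ Set.Ioo a b :=
    Ioo_mem_nhdsLT_of_mem (Set.mem_Ioc.2 ⟨hab, le_rfl⟩)
  rcases (h3.and h2).exists with ⟨t, ht1, ht2⟩
  exact ⟨t, ht1, ht2⟩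

lemma exists_near_right {a b : ℝ} (hab : a < b) {Q : ℝ → Prop} (h : ∀ᶠ t in nhds a, Q t) :
    ∃ t ∈ Set.Ioo a b, Q t := by
  have h2 : ∀ᶠ t in nhdsWithin a (Set.Ioi a), Q t := h.filter_mono nhdsWithin_le_nhds
  have h3 : ∀ᶠ t in nhdsWithin a (Set.Ioi a), t ∈ Set.Ioo a b :=
    Ioo_mem_nhdsGT_of_mem (Set.mem_Ico.2 ⟨le_rfl, hab⟩)
  rcases (h3.and h2).exists with ⟨t, ht1, ht2⟩
  exact ⟨t, ht1, ht2⟩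

lemma pos_on_of_left {f : ℝ → ℝ} (hf : Continuous f) {a b : ℝ}
    (hz : ∀ t ∈ Set.Ioo a b, f t ≠ 0) (ha : 0 < f a) : ∀ t ∈ Set.Ioo a b, 0 < f t := by
  intro t ht
  rcases lt_trichotomy (f t) 0 with hneg | h0 | hpos
  · exfalso
    have hm : (0:ℝ) ∈ Set.Ioo (f t) (f a) := ⟨hneg, ha⟩
    rcases intermediate_value_Ioo' (le_of_lt ht.1) hf.continuousOn hm with ⟨z, hz1, hz2⟩
    exact hz z ⟨hz1.1, lt_trans hz1.2 ht.2⟩ hz2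
  · exact absurd h0 (hz t ht)
  · exact hpos

lemma pos_on_of_right {f : ℝ → ℝ} (hf : Continuous f) {a b : ℝ}
    (hz : ∀ t ∈ Set.Ioo a b, f t ≠ 0) (hb : 0 < f b) : ∀ t ∈ Set.Ioo a b, 0 < f t := by
  intro t ht
  rcases lt_trichotomy (f t) 0 with hneg | h0 | hpos
  · exfalso
    have hm : (0:ℝ) ∈ Set.Ioo (f t) (f b) := ⟨hneg, hb⟩
    rcases intermediate_value_Ioo (le_of_lt ht.2) hf.continuousOn hm with ⟨z, hz1, hz2⟩
    exact hz z ⟨lt_trans ht.1 hz1.1, hz1.2⟩ hz2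
  · exact absurd h0 (hz t ht)
  · exact hpos

/-! a circumscribed empty circle stays empty nearby -/

lemma eventually_outside
    (P : Finset Traj) (hcont : ∀ x ∈ P, Continuous x)
    {e1 e2 e3 e4 : Traj} (he1 : Continuous e1) (he2 : Continuous e2) (he3 : Continuous e3)
    {u : ℝ} {o : Plane} {ρ2 : ℝ} (hρ2 : 0 < ρ2)
    (h1 : d2 (e1 u) o = ρ2) (h2 : d2 (e2 u) o = ρ2) (h3 : d2 (e3 u) o = ρ2)
    (h4 : d2 (e4 u) o = ρ2)
    (hemp : ∀ x ∈ P, ρ2 ≤ d2 (x u) o)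
    (hn5 : ∀ x ∈ P, x ≠ e1 → x ≠ e2 → x ≠ e3 → x ≠ e4 →
      ¬ Concyclic5 (e1 u) (e2 u) (e3 u) (e4 u) (x u))
    (hg : orient (e1 u) (e2 u) (e3 u) ≠ 0) :
    ∀ᶠ t in nhds u, ∀ x ∈ P, x ≠ e1 → x ≠ e2 → x ≠ e3 → x ≠ e4 →
      0 < orient (e1 t) (e2 t) (e3 t) * icd (e1 t) (e2 t) (e3 t) (x t) := by
  classical
  set S : Finset Traj := P.filter (fun x => x ≠ e1 ∧ x ≠ e2 ∧ x ≠ e3 ∧ x ≠ e4) with hS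
  have main : ∀ᶠ t in nhds u, ∀ x ∈ S,
      0 < orient (e1 t) (e2 t) (e3 t) * icd (e1 t) (e2 t) (e3 t) (x t) := by
    rw [Filter.eventually_all_finset]
    intro x hxS
    rw [hS, Finset.mem_filter] at hxS
    obtain ⟨hxP, hx1, hx2, hx3, hx4⟩ := hxS
    have hocc : o = cc (e1 u) (e2 u) (e3 u) := cc_unique hg h1 h2 h3
    have hrad : rad2 (e1 u) (e2 u) (e3 u) = ρ2 := by rw [rad2, ← hocc, h1]
    have hxout : ρ2 < d2 (x u) o := by
      rcases lt_or_eq_of_le (hemp x hxP) with h | h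
      · exact h
      · exact absurd (conc5_mk hρ2 h1 h2 h3 h4 h.symm) (hn5 x hxP hx1 hx2 hx3 hx4)
    have hval : 0 < orient (e1 u) (e2 u) (e3 u) * icd (e1 u) (e2 u) (e3 u) (x u) := by
      have hid := cc_pow (e1 u) (e2 u) (e3 u) (x u) hg
      rw [← hocc, hrad] at hid
      have hsq : 0 < orient (e1 u) (e2 u) (e3 u) ^ 2 := by
        rcases hg.lt_or_gt with h | h <;> nlinarith
      have heq : orient (e1 u) (e2 u) (e3 u) * icd (e1 u) (e2 u) (e3 u) (x u)
          = orient (e1 u) (e2 u) (e3 u) ^ 2 * (d2 (x u) o - ρ2) := by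
        rw [← hid]; ring
      rw [heq]
      exact mul_pos hsq (sub_pos.2 hxout)
    have hψ : Continuous fun t =>
        orient (e1 t) (e2 t) (e3 t) * icd (e1 t) (e2 t) (e3 t) (x t) :=
      (cont_orient he1 he2 he3).mul (cont_icd he1 he2 he3 (hcont x hxP))
    have hm := hψ.continuousAt (x := u) |>.preimage_mem_nhds (Ioi_mem_nhds hval)
    exact Filter.eventually_of_mem hm (fun t ht => ht)
  filter_upwards [main] with t ht x hxP hx1 hx2 hx3 hx4
  exact ht x (by rw [hS, Finset.mem_filter]; exact ⟨hxP, hx1, hx2, hx3, hx4⟩)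



/- additional orientation/Delaunay symmetry helpers -/

lemma orient_flip (a b x : Plane) : orient b a x = - orient a b x := by
  simp only [orient]; ring

lemma delaunay_symm {Q : Finset Traj} {a b : Traj} {t : ℝ} (h : DelaunayEdge Q a b t) :
    DelaunayEdge Q b a t := by
  obtain ⟨o, ρ, h1, h2, h3⟩ := h
  exact ⟨o, ρ, h2, h1, h3⟩



/-- A single (apex-first, sign `ε`) Delaunay crossing, packaged. -/
structure Cross (P : Finset Traj) (ε : ℝ) (π κ r : Traj) (t₀ t₁ σ₁ : ℝ) : Prop where
  lt01 : t₀ < t₁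
  del0 : DelaunayEdge P π κ t₀
  del1 : DelaunayEdge P π κ t₁
  ndel : ∀ t ∈ Set.Ioo t₀ t₁, ¬ DelaunayEdge P π κ t
  derase : ∀ t ∈ Set.Icc t₀ t₁, DelaunayEdge (P.erase r) π κ t
  smem : σ₁ ∈ Set.Icc t₀ t₁
  sseg : r σ₁ ∈ segment ℝ (π σ₁) (κ σ₁)
  uniq : ∀ t ∈ Set.Icc t₀ t₁, r t ∈ segment ℝ (π t) (κ t) → t = σ₁
  dir : ∃ δ > (0:ℝ), (∀ u ∈ Set.Ioo (σ₁ - δ) σ₁, 0 < ε * orient (π u) (κ u) (r u)) ∧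
        (∀ u ∈ Set.Ioo σ₁ (σ₁ + δ), ε * orient (π u) (κ u) (r u) < 0)

variable {P : Finset Traj} {ε : ℝ} {π κ r : Traj} {t₀ t₁ σ₁ : ℝ}

/-- The crossing time is interior. -/
lemma Cross.interior (c : Cross P ε π κ r t₀ t₁ σ₁) (hrP : r ∈ P)
    (hπκ : ∀ t, π t ≠ κ t) (hrπ : ∀ t, r t ≠ π t) (hrκ : ∀ t, r t ≠ κ t) :
    t₀ < σ₁ ∧ σ₁ < t₁ := by
  obtain ⟨s, hs0, hs1, e0, e1⟩ := seg_strict c.sseg (hrπ σ₁) (hrκ σ₁)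
  have key : ∀ u : ℝ, DelaunayEdge P π κ u → σ₁ ≠ u := by
    intro u hdel he
    subst he
    obtain ⟨o, ρ2, hρ2, hπo, hκo, hemp⟩ := delaunay_d2 hdel (hπκ σ₁)
    have := chord hπo hκo e0 e1
    have hlt : d2 (r σ₁) o < ρ2 := by
      nlinarith [mul_pos (mul_pos hs0 (by linarith : (0:ℝ) < 1 - s))
        (d2_pos (fun h : κ σ₁ = π σ₁ => hπκ σ₁ h.symm))]
    exact absurd (hemp r hrP) (not_le.2 hlt)
  constructor
  · exact lt_of_le_of_ne c.smem.1 (Ne.symm (fun h => key t₀ c.del0 h.symm)).symm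
  · exact lt_of_le_of_ne c.smem.2 (key t₁ c.del1)

/-- Inside the crossing interval, collinearity of `π, κ, r` only happens at `σ₁`. -/
lemma Cross.zero (c : Cross P ε π κ r t₀ t₁ σ₁) (hrP : r ∈ P)
    (hπκ : ∀ t, π t ≠ κ t) :
    ∀ u ∈ Set.Ioo t₀ t₁, orient (π u) (κ u) (r u) = 0 → u = σ₁ := by
  intro u hu hor
  obtain ⟨s, e0, e1⟩ := orient_param (hπκ u) hor
  by_cases hs : 0 ≤ s ∧ s ≤ 1
  · exact c.uniq u (Set.mem_Icc_of_Ioo hu) (seg_of_param s hs.1 hs.2 e0 e1)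
  · exfalso
    apply c.ndel u hu
    obtain ⟨o, ρ2, hρ2, hπo, hκo, hemp⟩ :=
      delaunay_d2 (c.derase u (Set.mem_Icc_of_Ioo hu)) (hπκ u)
    refine delaunay_mk o ρ2 (le_of_lt hρ2) hπo hκo ?_
    intro x hxP
    by_cases hxr : x = r
    · subst hxr
      have hch := chord hπo hκo e0 e1
      have hss : 0 < s * (s - 1) := by
        rcases not_and_or.1 hs with h | h <;> push_neg at h <;> nlinarith
      have : ρ2 ≤ d2 (x u) o := by
        nlinarith [mul_pos hss (d2_pos (fun h : κ u = π u => hπκ u h.symm))]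
      exact not_lt.2 this
    · exact not_lt.2 (hemp x (Finset.mem_erase.2 ⟨hxr, hxP⟩))

/-- Sign of the (ε-adjusted) orientation before and after the crossing time. -/
lemma Cross.sign_before (c : Cross P ε π κ r t₀ t₁ σ₁) (hrP : r ∈ P)
    (hπκ : ∀ t, π t ≠ κ t) (hε : ε ≠ 0)
    (hcπ : Continuous π) (hcκ : Continuous κ) (hcr : Continuous r)
    (hint : t₀ < σ₁ ∧ σ₁ < t₁) :
    ∀ u ∈ Set.Ioo t₀ σ₁, 0 < ε * orient (π u) (κ u) (r u) := by
  intro u hu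
  obtain ⟨δ, hδ, hbef, _⟩ := c.dir
  set f : ℝ → ℝ := fun t => ε * orient (π t) (κ t) (r t) with hf
  have hcf : Continuous f := continuous_const.mul (cont_orient hcπ hcκ hcr)
  rcases lt_trichotomy (f u) 0 with hneg | h0 | hpos
  · exfalso
    set w : ℝ := (max u (σ₁ - δ) + σ₁) / 2 with hw
    have hw1 : u < w := by
      have h1 : u ≤ max u (σ₁ - δ) := le_max_left _ _
      have h2 : max u (σ₁ - δ) < σ₁ := max_lt hu.2 (by linarith)
      simp only [hw]; linarith
    have hw2 : w < σ₁ := by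
      have h2 : max u (σ₁ - δ) < σ₁ := max_lt hu.2 (by linarith)
      simp only [hw]; linarith
    have hw3 : σ₁ - δ < w := by
      have h1 : σ₁ - δ ≤ max u (σ₁ - δ) := le_max_right _ _
      simp only [hw]; linarith
    have hfw : 0 < f w := hbef w ⟨hw3, hw2⟩
    have hm : (0:ℝ) ∈ Set.Ioo (f u) (f w) := ⟨hneg, hfw⟩
    rcases intermediate_value_Ioo (le_of_lt hw1) hcf.continuousOn hm with ⟨z, hz1, hz2⟩
    have hz3 : z ∈ Set.Ioo t₀ t₁ := ⟨lt_trans hu.1 hz1.1, by linarith [hz1.2, hint.2]⟩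
    have : orient (π z) (κ z) (r z) = 0 := by
      rcases mul_eq_zero.1 hz2 with h | h
      · exact absurd h hε
      · exact h
    have := c.zero hrP hπκ z hz3 this
    linarith [hz1.2, this ▸ hw2]
  · exfalso
    have : orient (π u) (κ u) (r u) = 0 := by
      rcases mul_eq_zero.1 h0 with h | h
      · exact absurd h hε
      · exact h
    have := c.zero hrP hπκ u ⟨hu.1, lt_trans hu.2 hint.2⟩ this
    linarith [hu.2]
  · exact hpos

lemma Cross.sign_after (c : Cross P ε π κ r t₀ t₁ σ₁) (hrP : r ∈ P)
    (hπκ : ∀ t, π t ≠ κ t) (hε : ε ≠ 0)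
    (hcπ : Continuous π) (hcκ : Continuous κ) (hcr : Continuous r)
    (hint : t₀ < σ₁ ∧ σ₁ < t₁) :
    ∀ u ∈ Set.Ioo σ₁ t₁, ε * orient (π u) (κ u) (r u) < 0 := by
  intro u hu
  obtain ⟨δ, hδ, _, haft⟩ := c.dir
  set f : ℝ → ℝ := fun t => ε * orient (π t) (κ t) (r t) with hf
  have hcf : Continuous f := continuous_const.mul (cont_orient hcπ hcκ hcr)
  rcases lt_trichotomy (f u) 0 with hneg | h0 | hpos
  · exact hneg
  · exfalso
    have : orient (π u) (κ u) (r u) = 0 := by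
      rcases mul_eq_zero.1 h0 with h | h
      · exact absurd h hε
      · exact h
    have := c.zero hrP hπκ u ⟨lt_trans hint.1 hu.1, hu.2⟩ this
    linarith [hu.1]
  · exfalso
    set w : ℝ := (σ₁ + min u (σ₁ + δ)) / 2 with hw
    have h2 : σ₁ < min u (σ₁ + δ) := lt_min hu.1 (by linarith)
    have hw1 : σ₁ < w := by simp only [hw]; linarith
    have hw2 : w < u := by
      have := min_le_left u (σ₁ + δ)
      simp only [hw]; linarith [h2]
    have hw3 : w < σ₁ + δ := by
      have := min_le_right u (σ₁ + δ)
      simp only [hw]; linarith [h2]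
    have hfw : f w < 0 := haft w ⟨hw1, hw3⟩
    have hm : (0:ℝ) ∈ Set.Ioo (f w) (f u) := ⟨hfw, hpos⟩
    rcases intermediate_value_Ioo (le_of_lt hw2) hcf.continuousOn hm with ⟨z, hz1, hz2⟩
    have hz3 : z ∈ Set.Ioo t₀ t₁ := ⟨by linarith [hint.1, hz1.1], lt_trans hz1.2 hu.2⟩
    have : orient (π z) (κ z) (r z) = 0 := by
      rcases mul_eq_zero.1 hz2 with h | h
      · exact absurd h hε
      · exact h
    have := c.zero hrP hπκ z hz3 this
    linarith [hz1.1, this ▸ hw1]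

/-- Violation witness: inside the interval, an empty disc through `π, κ` containing `r`. -/
lemma Cross.viol (c : Cross P ε π κ r t₀ t₁ σ₁) (hπκ : ∀ t, π t ≠ κ t) :
    ∀ t ∈ Set.Ioo t₀ t₁, ∃ o ρ2, 0 < ρ2 ∧ d2 (π t) o = ρ2 ∧ d2 (κ t) o = ρ2 ∧
      (∀ x ∈ P, x ≠ r → ρ2 ≤ d2 (x t) o) ∧ d2 (r t) o < ρ2 := by
  intro t ht
  obtain ⟨o, ρ2, hρ2, hπo, hκo, hemp⟩ :=
    delaunay_d2 (c.derase t (Set.mem_Icc_of_Ioo ht)) (hπκ t)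
  refine ⟨o, ρ2, hρ2, hπo, hκo, fun x hx hxr => hemp x (Finset.mem_erase.2 ⟨hxr, hx⟩), ?_⟩
  by_contra hge
  apply c.ndel t ht
  refine delaunay_mk o ρ2 (le_of_lt hρ2) hπo hκo ?_
  intro x hxP
  by_cases hxr : x = r
  · subst hxr; exact hge
  · exact not_lt.2 (hemp x (Finset.mem_erase.2 ⟨hxr, hxP⟩))

/-- Key pencil inequality data at a violated time. -/
lemma Cross.key (c : Cross P ε π κ r t₀ t₁ σ₁) (hπκ : ∀ t, π t ≠ κ t)
    (α : Traj) (hαP : α ∈ P) (hαr : α ≠ r) :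
    ∀ t ∈ Set.Ioo t₀ t₁, orient (π t) (κ t) (r t) ≠ 0 →
    ∃ W u v : ℝ, 0 ≤ u ∧ v < 0 ∧
      W = d2 (α t) (cc (π t) (κ t) (r t)) - rad2 (π t) (κ t) (r t) ∧
      orient (π t) (κ t) (r t) * W = icd (π t) (κ t) (r t) (α t) ∧
      (W - u) * orient (π t) (κ t) (r t) = (0 - v) * orient (π t) (κ t) (α t) := by
  intro t ht hg
  obtain ⟨o, ρ2, hρ2, hπo, hκo, hemp, hrin⟩ := c.viol hπκ t ht
  refine ⟨d2 (α t) (cc (π t) (κ t) (r t)) - rad2 (π t) (κ t) (r t),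
    d2 (α t) o - ρ2, d2 (r t) o - ρ2, by linarith [hemp α hαP hαr], by linarith, rfl,
    cc_pow _ _ _ _ hg, ?_⟩
  have hpen := pencil (π t) (κ t) (α t) (r t) (cc (π t) (κ t) (r t)) o
    (rad2 (π t) (κ t) (r t)) ρ2 (cc_p _ _ _) (cc_q _ _ _ hg) hπo hκo
  rw [cc_r _ _ _ hg] at hpen
  linarith [hpen]

/-- Chord contradiction: a fourth point on the circumcircle collinear with `p, q`. -/
lemma chord_contra {p q r a : Plane} (hg : orient p q r ≠ 0) (hK : orient p q a = 0)
    (hW : d2 a (cc p q r) = rad2 p q r) (hap : a ≠ p) (haq : a ≠ q) (hpq : p ≠ q) :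
    False := by
  obtain ⟨τ, e0, e1⟩ := orient_param hpq hK
  have hch := chord (cc_p p q r) (cc_q p q r hg) e0 e1
  have hqp : 0 < d2 q p := d2_pos (fun h => hpq h.symm)
  have hττ : τ * (τ - 1) = 0 := by
    rcases mul_eq_zero.1 (by nlinarith : τ * (τ - 1) * d2 q p = 0) with h | h
    · exact h
    · exact absurd h (ne_of_gt hqp)
  rcases mul_eq_zero.1 hττ with h | h
  · exact hap (plane_ext (by rw [e0, h]; ring) (by rw [e1, h]; ring))
  · have : τ = 1 := by linarith
    exact haq (plane_ext (by rw [e0, this]; ring) (by rw [e1, this]; ring))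



set_option maxHeartbeats 4000000


open Set

lemma master (P : Finset Traj) (ε : ℝ) (hε : ε = 1 ∨ ε = -1)
    (π κ α r : Traj)
    (hcont : ∀ x ∈ P, Continuous x)
    (hπP : π ∈ P) (hκP : κ ∈ P) (hαP : α ∈ P) (hrP : r ∈ P)
    (hnc : ∀ p ∈ P, ∀ q ∈ P, p ≠ q → ∀ t : ℝ, p t ≠ q t)
    (hn4 : ∀ t : ℝ, ¬ Collinear ℝ ({π t, κ t, α t, r t} : Set Plane))
    (hn5 : ∀ t : ℝ, ∀ x ∈ P, x ≠ π → x ≠ κ → x ≠ α → x ≠ r →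
      ¬ Concyclic5 (π t) (κ t) (α t) (r t) (x t))
    (hπκ : π ≠ κ) (hπα : π ≠ α) (hπr : π ≠ r) (hκα : κ ≠ α) (hκr : κ ≠ r) (hαr : α ≠ r)
    {t₀ t₁ t₂ t₃ σ₁ σ₂ : ℝ}
    (c₁ : Cross P ε π κ r t₀ t₁ σ₁) (c₂ : Cross P ε π α r t₂ t₃ σ₂)
    (hσσ : σ₁ < σ₂) :
    t₀ < t₂ ∧ t₁ < t₃ := by
  have hε0 : ε ≠ 0 := by rcases hε with rfl | rfl <;> norm_num
  have hcπ : Continuous π := hcont π hπP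
  have hcκ : Continuous κ := hcont κ hκP
  have hcα : Continuous α := hcont α hαP
  have hcr : Continuous r := hcont r hrP
  have nπκ : ∀ t, π t ≠ κ t := hnc π hπP κ hκP hπκ
  have nπα : ∀ t, π t ≠ α t := hnc π hπP α hαP hπα
  have nπr : ∀ t, π t ≠ r t := hnc π hπP r hrP hπr
  have nκα : ∀ t, κ t ≠ α t := hnc κ hκP α hαP hκα
  have nκr : ∀ t, κ t ≠ r t := hnc κ hκP r hrP hκr
  have nαr : ∀ t, α t ≠ r t := hnc α hαP r hrP hαr
  have rπ : ∀ t, r t ≠ π t := fun t => (nπr t).symm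
  have rκ : ∀ t, r t ≠ κ t := fun t => (nκr t).symm
  have rα : ∀ t, r t ≠ α t := fun t => (nαr t).symm
  have i₁ := c₁.interior hrP nπκ rπ rκ
  have i₂ := c₂.interior hrP nπα rπ rα
  have S1b := c₁.sign_before hrP nπκ hε0 hcπ hcκ hcr i₁
  have S1a := c₁.sign_after hrP nπκ hε0 hcπ hcκ hcr i₁
  have S2b := c₂.sign_before hrP nπα hε0 hcπ hcα hcr i₂
  have S2a := c₂.sign_after hrP nπα hε0 hcπ hcα hcr i₂
  have key₁ := c₁.key nπκ α hαP hαr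
  have key₂ := c₂.key nπα κ hκP hκr
  have hcD : Continuous fun t => ε * icd (π t) (κ t) (α t) (r t) :=
    continuous_const.mul (cont_icd hcπ hcκ hcα hcr)
  have hcK : Continuous fun t => ε * orient (π t) (κ t) (α t) :=
    continuous_const.mul (cont_orient hcπ hcκ hcα)
  -- no cocircularity in the overlap of same-sign regions
  have noz : ∀ u, u ∈ Set.Ioo t₀ t₁ → u ∈ Set.Ioo t₂ t₃ →
      0 < (ε * orient (π u) (κ u) (r u)) * (ε * orient (π u) (α u) (r u)) →
      ε * icd (π u) (κ u) (α u) (r u) ≠ 0 := by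
    intro u hu1 hu2 hGH hD0
    have hg : orient (π u) (κ u) (r u) ≠ 0 := by
      intro h; rw [h] at hGH; nlinarith
    have hh : orient (π u) (α u) (r u) ≠ 0 := by
      intro h; rw [h] at hGH; nlinarith
    have hicd0 : icd (π u) (κ u) (α u) (r u) = 0 := by
      rcases mul_eq_zero.1 hD0 with h | h
      · exact absurd h hε0
      · exact h
    obtain ⟨W, uu, vv, huu, hvv, hWdef, hWid, hpen⟩ := key₁ u hu1 hg
    obtain ⟨W', uu', vv', huu', hvv', hW'def, hW'id, hpen'⟩ := key₂ u hu2 hh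
    rw [icd_swap23, hicd0] at hWid
    rw [icd_cyc, hicd0] at hW'id
    have hW0 : W = 0 := by
      rcases mul_eq_zero.1 (by linarith [hWid] : orient (π u) (κ u) (r u) * W = 0) with h | h
      · exact absurd h hg
      · exact h
    have hW'0 : W' = 0 := by
      rcases mul_eq_zero.1 (by linarith [hW'id] : orient (π u) (α u) (r u) * W' = 0) with h | h
      · exact absurd h hh
      · exact h
    set k := orient (π u) (κ u) (α u) with hkdef
    by_cases hk : k = 0
    · refine chord_contra hg hk ?_ (fun h => nπα u h.symm) (fun h => nκα u h.symm) (nπκ u)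
      rw [hWdef] at hW0; linarith
    · -- sign contradiction
      have hgh : 0 < orient (π u) (κ u) (r u) * orient (π u) (α u) (r u) := by
        have hε2 : ε * ε = 1 := by rcases hε with rfl | rfl <;> norm_num
        nlinarith [hGH]
      rw [hW0] at hpen
      rw [hW'0] at hpen'
      rw [orient_swap (π u) (κ u) (α u)] at hpen'
      -- hpen : (0 - uu) * g = (0 - vv) * k ; hpen' : (0 - uu') * h = (0 - vv') * (-k)
      have hk2 : 0 < k^2 := by rcases lt_or_gt_of_ne hk with h | h <;> nlinarith
      have e1 : uu * (orient (π u) (κ u) (r u) * k) = vv * k^2 := by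
        linear_combination (-k) * hpen
      have e2 : uu' * (orient (π u) (α u) (r u) * k) = - vv' * k^2 := by
        linear_combination (-k) * hpen'
      have hgk : orient (π u) (κ u) (r u) * k < 0 := by nlinarith
      have hhk : 0 < orient (π u) (α u) (r u) * k := by nlinarith
      nlinarith
  -- ###############################  PART B : t₁ < t₃  ###############################
  have hB : t₁ < t₃ := by
    by_contra h31
    push_neg at h31
    have hσ₂t₁ : σ₂ < t₁ := lt_of_lt_of_le i₂.2 h31
    have hσ₂I : σ₂ ∈ Set.Ioo t₀ t₁ := ⟨lt_trans i₁.1 hσσ, hσ₂t₁⟩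
    have hGσ₂ : ε * orient (π σ₂) (κ σ₂) (r σ₂) < 0 := S1a σ₂ ⟨hσσ, hσ₂t₁⟩
    obtain ⟨s₂, hs₂0, hs₂1, e20, e21⟩ := seg_strict c₂.sseg (rπ σ₂) (rα σ₂)
    have hGeq : orient (π σ₂) (κ σ₂) (r σ₂) = s₂ * orient (π σ₂) (κ σ₂) (α σ₂) :=
      orient_comb _ _ _ _ s₂ e20 e21
    have hKσ₂ : ε * orient (π σ₂) (κ σ₂) (α σ₂) < 0 := by
      by_contra hge
      push_neg at hge
      have h1 : ε * orient (π σ₂) (κ σ₂) (r σ₂)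
          = s₂ * (ε * orient (π σ₂) (κ σ₂) (α σ₂)) := by rw [hGeq]; ring
      nlinarith [mul_nonneg (le_of_lt hs₂0) hge]
    have hDσ₂ : 0 < ε * icd (π σ₂) (κ σ₂) (α σ₂) (r σ₂) := by
      have hieq := icd_param2 (π σ₂) (κ σ₂) (α σ₂) (r σ₂) s₂ e20 e21
      have hM : 0 < d2 (α σ₂) (π σ₂) := d2_pos (fun h => nπα σ₂ h.symm)
      have h1 : ε * icd (π σ₂) (κ σ₂) (α σ₂) (r σ₂)
          = (s₂ * (1 - s₂) * d2 (α σ₂) (π σ₂))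
            * (-(ε * orient (π σ₂) (κ σ₂) (α σ₂))) := by rw [hieq]; ring
      rw [h1]
      exact mul_pos (mul_pos (mul_pos hs₂0 (by linarith)) hM) (by linarith)
    have hDpos : ∀ u ∈ Set.Ioo σ₂ t₃, 0 < ε * icd (π u) (κ u) (α u) (r u) := by
      refine pos_on_of_left hcD ?_ hDσ₂
      intro u hu
      have hu1 : u ∈ Set.Ioo t₀ t₁ := ⟨lt_trans hσ₂I.1 hu.1, lt_of_lt_of_le hu.2 h31⟩
      have hu2 : u ∈ Set.Ioo t₂ t₃ := ⟨lt_trans i₂.1 hu.1, hu.2⟩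
      exact noz u hu1 hu2 (mul_pos_of_neg_of_neg
        (S1a u ⟨lt_trans hσσ hu.1, hu1.2⟩) (S2a u hu))
    have hKneg : ∀ u ∈ Set.Ioo σ₂ t₃, ε * orient (π u) (κ u) (α u) < 0 := by
      intro u hu
      have hu2 : u ∈ Set.Ioo t₂ t₃ := ⟨lt_trans i₂.1 hu.1, hu.2⟩
      have hHu : ε * orient (π u) (α u) (r u) < 0 := S2a u hu
      have hh : orient (π u) (α u) (r u) ≠ 0 := by
        intro h; rw [h, mul_zero] at hHu; linarith
      obtain ⟨W', uu', vv', huu', hvv', hW'def, hW'id, hpen'⟩ := key₂ u hu2 hh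
      rw [icd_cyc] at hW'id
      have hq1 : (ε * orient (π u) (α u) (r u)) * W'
          = ε * icd (π u) (κ u) (α u) (r u) := by
        rw [← hW'id]; ring
      have hW'neg : W' < 0 := by
        by_contra hge
        push_neg at hge
        nlinarith [mul_nonpos_of_nonpos_of_nonneg (le_of_lt hHu) hge, hDpos u hu]
      rw [orient_swap (π u) (κ u) (α u)] at hpen'
      have hq2 : (W' - uu') * (ε * orient (π u) (α u) (r u))
          = vv' * (ε * orient (π u) (κ u) (α u)) := by
        linear_combination ε * hpen'
      by_contra hge
      push_neg at hge
      nlinarith [mul_pos_of_neg_of_neg (show W' - uu' < 0 by linarith) hHu,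
        mul_nonpos_of_nonpos_of_nonneg (le_of_lt hvv') hge]
    have hcH : Continuous fun t => ε * orient (π t) (α t) (r t) :=
      continuous_const.mul (cont_orient hcπ hcα hcr)
    have hKt₃ : ε * orient (π t₃) (κ t₃) (α t₃) ≤ 0 :=
      le_right_endpoint hcK i₂.2 (fun t ht => le_of_lt (hKneg t ht))
    have hDt₃ : 0 ≤ ε * icd (π t₃) (κ t₃) (α t₃) (r t₃) := by
      have := le_right_endpoint (f := fun t => -(ε * icd (π t) (κ t) (α t) (r t)))
        hcD.neg i₂.2 (fun t ht => by simp only [neg_nonpos]; linarith [hDpos t ht])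
      simpa using this
    have hHt₃ : ε * orient (π t₃) (α t₃) (r t₃) ≤ 0 :=
      le_right_endpoint hcH i₂.2 (fun t ht => le_of_lt (S2a t ht))
    by_cases hH0 : orient (π t₃) (α t₃) (r t₃) = 0
    · -- degenerate: π, α, r collinear at t₃, so π, κ, α, r all collinear : contra
      obtain ⟨s, f0, f1⟩ := orient_param (nπα t₃) hH0
      have hsout : 0 < s * (s - 1) := by
        by_cases hs : 0 ≤ s ∧ s ≤ 1
        · exfalso
          have hseg : r t₃ ∈ segment ℝ (π t₃) (α t₃) := seg_of_param s hs.1 hs.2 f0 f1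
          have := c₂.uniq t₃ (Set.mem_Icc.2 ⟨le_of_lt c₂.lt01, le_rfl⟩) hseg
          exact absurd this (ne_of_gt i₂.2)
        · rcases not_and_or.1 hs with h | h <;> push_neg at h <;> nlinarith
      have hieq := icd_param2 (π t₃) (κ t₃) (α t₃) (r t₃) s f0 f1
      have hM : 0 < d2 (α t₃) (π t₃) := d2_pos (fun h => nπα t₃ h.symm)
      have hK0 : orient (π t₃) (κ t₃) (α t₃) = 0 := by
        have h1 : ε * icd (π t₃) (κ t₃) (α t₃) (r t₃)
            = (s * (s - 1) * d2 (α t₃) (π t₃)) * (ε * orient (π t₃) (κ t₃) (α t₃)) := by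
          rw [hieq]; ring
        have h2 : ε * orient (π t₃) (κ t₃) (α t₃) = 0 := by nlinarith [mul_pos hsout hM]
        rcases mul_eq_zero.1 h2 with h | h
        · exact absurd h hε0
        · exact h
      apply hn4 t₃
      have hcol : Collinear ℝ ({π t₃, α t₃, κ t₃, r t₃} : Set Plane) :=
        collinear4 (nπα t₃) (by rw [orient_swap]; rw [hK0]; ring) hH0
      refine hcol.subset ?_
      intro z hz
      simp only [Set.mem_insert_iff, Set.mem_singleton_iff] at hz ⊢
      tauto
    · -- H t₃ < 0 strictly
      have hHlt : ε * orient (π t₃) (α t₃) (r t₃) < 0 := by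
        rcases lt_or_eq_of_le hHt₃ with h | h
        · exact h
        · exact absurd (by
            rcases mul_eq_zero.1 h with h' | h'
            · exact absurd h' hε0
            · exact h') hH0
      obtain ⟨o₃, ρ₃2, hρ₃, hπo₃, hαo₃, hemp₃⟩ := delaunay_d2 c₂.del1 (nπα t₃)
      have hF₃r : ρ₃2 ≤ d2 (r t₃) o₃ := hemp₃ r hrP
      have hF₃κ : ρ₃2 ≤ d2 (κ t₃) o₃ := hemp₃ κ hκP
      have hW'id := cc_pow (π t₃) (α t₃) (r t₃) (κ t₃) hH0
      rw [icd_cyc] at hW'id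
      have hpen₃ := pencil (π t₃) (α t₃) (κ t₃) (r t₃) (cc (π t₃) (α t₃) (r t₃)) o₃
        (rad2 (π t₃) (α t₃) (r t₃)) ρ₃2 (cc_p _ _ _) (cc_q _ _ _ hH0) hπo₃ hαo₃
      rw [cc_r _ _ _ hH0] at hpen₃
      -- hpen₃ : (W' - F₃κ) * orient(παr) = (0 - F₃r) * orient(πακ)
      rcases lt_or_eq_of_le hDt₃ with hD | hD
      · -- main subcase : D t₃ > 0 : immediate sign contradiction
        have hW'neg : d2 (κ t₃) (cc (π t₃) (α t₃) (r t₃))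
            - rad2 (π t₃) (α t₃) (r t₃) < 0 := by
          have hq1 : (ε * orient (π t₃) (α t₃) (r t₃))
              * (d2 (κ t₃) (cc (π t₃) (α t₃) (r t₃)) - rad2 (π t₃) (α t₃) (r t₃))
              = ε * icd (π t₃) (κ t₃) (α t₃) (r t₃) := by rw [← hW'id]; ring
          nlinarith
        have hq2 : ((d2 (κ t₃) (cc (π t₃) (α t₃) (r t₃)) - rad2 (π t₃) (α t₃) (r t₃))
              - (d2 (κ t₃) o₃ - ρ₃2)) * (ε * orient (π t₃) (α t₃) (r t₃))
            = (d2 (r t₃) o₃ - ρ₃2) * (ε * orient (π t₃) (κ t₃) (α t₃)) := by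
          have hsw : orient (π t₃) (α t₃) (κ t₃) = - orient (π t₃) (κ t₃) (α t₃) :=
            orient_swap _ _ _
          have := hpen₃
          rw [hsw] at this
          linear_combination ε * this
        nlinarith [mul_pos_of_neg_of_neg
          (show (d2 (κ t₃) (cc (π t₃) (α t₃) (r t₃)) - rad2 (π t₃) (α t₃) (r t₃))
              - (d2 (κ t₃) o₃ - ρ₃2) < 0 by nlinarith) hHlt,
          mul_nonpos_of_nonneg_of_nonpos (show (0:ℝ) ≤ d2 (r t₃) o₃ - ρ₃2 by linarith) hKt₃]
      · -- D t₃ = 0 : all four points lie on the circle of the Delaunay witness at t₃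
        have hicd₃ : icd (π t₃) (κ t₃) (α t₃) (r t₃) = 0 := by
          rcases mul_eq_zero.1 hD.symm with h | h
          · exact absurd h hε0
          · exact h
        have hW'0 : d2 (κ t₃) (cc (π t₃) (α t₃) (r t₃)) = rad2 (π t₃) (α t₃) (r t₃) := by
          have := hW'id
          rw [hicd₃] at this
          rcases mul_eq_zero.1 this with h | h
          · exact absurd h hH0
          · linarith
        have hKne : orient (π t₃) (κ t₃) (α t₃) ≠ 0 := by
          intro hK0
          exact chord_contra hH0 (by rw [orient_swap, hK0]; ring) hW'0
            (fun h => nπκ t₃ h.symm) (fun h => nκα t₃ h) (nπα t₃)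
        have hKlt : ε * orient (π t₃) (κ t₃) (α t₃) < 0 := by
          rcases lt_or_eq_of_le hKt₃ with h | h
          · exact h
          · exfalso
            rcases mul_eq_zero.1 h with h' | h'
            · exact absurd h' hε0
            · exact absurd h' hKne
        -- from the pencil identity with W' = 0 : F₃κ = 0 and F₃r = 0
        have hpen₃' : (0 - (d2 (κ t₃) o₃ - ρ₃2)) * orient (π t₃) (α t₃) (r t₃)
            = (0 - (d2 (r t₃) o₃ - ρ₃2)) * orient (π t₃) (α t₃) (κ t₃) := by
          have := hpen₃
          rw [hW'0] at this
          linear_combination this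
        have hsw : orient (π t₃) (α t₃) (κ t₃) = - orient (π t₃) (κ t₃) (α t₃) :=
          orient_swap _ _ _
        have hq3 : (d2 (κ t₃) o₃ - ρ₃2) * (ε * orient (π t₃) (α t₃) (r t₃))
            = - ((d2 (r t₃) o₃ - ρ₃2) * (ε * orient (π t₃) (κ t₃) (α t₃))) := by
          rw [hsw] at hpen₃'
          linear_combination (-ε) * hpen₃'
        have hκo₃ : d2 (κ t₃) o₃ = ρ₃2 := by nlinarith
        have hro₃ : d2 (r t₃) o₃ = ρ₃2 := by nlinarith
        -- the edge πκ is then Delaunay slightly before t₃ : contradiction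
        have hGt₃ : orient (π t₃) (κ t₃) (r t₃) ≠ 0 := by
          intro hG0
          obtain ⟨τ, g0, g1⟩ := orient_param (nπκ t₃) hG0
          have hch := chord hπo₃ hκo₃ g0 g1
          rw [hro₃] at hch
          have hqp : 0 < d2 (κ t₃) (π t₃) := d2_pos (fun h => nπκ t₃ h.symm)
          have hττ : τ * (τ - 1) = 0 := by
            rcases mul_eq_zero.1 (by linarith : τ * (τ - 1) * d2 (κ t₃) (π t₃) = 0)
              with h | h
            · exact h
            · exact absurd h (ne_of_gt hqp)
          rcases mul_eq_zero.1 hττ with h | h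
          · exact rπ t₃ (plane_ext (by rw [g0, h]; ring) (by rw [g1, h]; ring))
          · have hτ1 : τ = 1 := by linarith
            exact rκ t₃ (plane_ext (by rw [g0, hτ1]; ring) (by rw [g1, hτ1]; ring))
        have hev := eventually_outside P hcont (e1 := π) (e2 := κ) (e3 := r) (e4 := α)
          hcπ hcκ hcr hρ₃ hπo₃ hκo₃ hro₃ hαo₃ hemp₃
          (fun x hx h1 h2 h3 h4 => by
            intro ⟨o', ρ', hρ', d1, d2', d3, d4, d5⟩
            exact hn5 t₃ x hx h1 h2 h4 h3 ⟨o', ρ', hρ', d1, d2', d4, d3, d5⟩) hGt₃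
        obtain ⟨t, ht, hout⟩ := exists_near_left i₂.2 hev
        have htI : t ∈ Set.Ioo t₀ t₁ :=
          ⟨lt_trans hσ₂I.1 ht.1, lt_of_lt_of_le ht.2 h31⟩
        have hGt : ε * orient (π t) (κ t) (r t) < 0 :=
          S1a t ⟨lt_trans hσσ ht.1, htI.2⟩
        have hGtne : orient (π t) (κ t) (r t) ≠ 0 := by
          intro h; rw [h, mul_zero] at hGt; linarith
        apply c₁.ndel t htI
        refine delaunay_mk (cc (π t) (κ t) (r t)) (rad2 (π t) (κ t) (r t))
          (by rw [rad2]; exact d2_nonneg _ _) (cc_p _ _ _) (cc_q _ _ _ hGtne) ?_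
        intro x hxP
        by_cases hx1 : x = π
        · subst hx1; rw [cc_p]; exact lt_irrefl _
        by_cases hx2 : x = κ
        · subst hx2; rw [cc_q _ _ _ hGtne]; exact lt_irrefl _
        by_cases hx3 : x = r
        · subst hx3; rw [cc_r _ _ _ hGtne]; exact lt_irrefl _
        by_cases hx4 : x = α
        · intro hlt
          rw [hx4] at hlt
          have hid := cc_pow (π t) (κ t) (r t) (α t) hGtne
          have hq4 : (ε * orient (π t) (κ t) (r t))
              * (d2 (α t) (cc (π t) (κ t) (r t)) - rad2 (π t) (κ t) (r t))
              = - (ε * icd (π t) (κ t) (α t) (r t)) := by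
            rw [icd_swap23] at hid
            linear_combination ε * hid
          nlinarith [hDpos t ht]
        · intro hlt
          have hψ := hout x hxP hx1 hx2 hx3 hx4
          have hid := cc_pow (π t) (κ t) (r t) (x t) hGtne
          have hq5 : orient (π t) (κ t) (r t) * icd (π t) (κ t) (r t) (x t)
              = orient (π t) (κ t) (r t) ^ 2
                * (d2 (x t) (cc (π t) (κ t) (r t)) - rad2 (π t) (κ t) (r t)) := by
            rw [← hid]; ring
          nlinarith [mul_nonneg (sq_nonneg (orient (π t) (κ t) (r t)))
            (show (0:ℝ) ≤ rad2 (π t) (κ t) (r t) - d2 (x t) (cc (π t) (κ t) (r t))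
              by linarith)]
    -- end by_cases hH0 : both branches closed above produce False, so done
  -- ###############################  PART A : t₀ < t₂  ###############################
  have hA : t₀ < t₂ := by
    by_contra h02
    push_neg at h02
    have hσ₁J : σ₁ ∈ Set.Ioo t₂ t₃ := ⟨lt_of_le_of_lt h02 i₁.1, lt_trans hσσ i₂.2⟩
    have hHσ₁ : 0 < ε * orient (π σ₁) (α σ₁) (r σ₁) := S2b σ₁ ⟨hσ₁J.1, hσσ⟩
    obtain ⟨s₁, hs₁0, hs₁1, e10, e11⟩ := seg_strict c₁.sseg (rπ σ₁) (rκ σ₁)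
    have hHeq : orient (π σ₁) (α σ₁) (r σ₁) = s₁ * orient (π σ₁) (α σ₁) (κ σ₁) :=
      orient_comb _ _ _ _ s₁ e10 e11
    have hKσ₁ : ε * orient (π σ₁) (κ σ₁) (α σ₁) < 0 := by
      by_contra hge
      push_neg at hge
      have h1 : ε * orient (π σ₁) (α σ₁) (r σ₁)
          = s₁ * (-(ε * orient (π σ₁) (κ σ₁) (α σ₁))) := by
        rw [hHeq, orient_swap (π σ₁) (κ σ₁) (α σ₁)]; ring
      nlinarith [mul_nonneg (le_of_lt hs₁0) hge]
    have hDσ₁ : 0 < ε * icd (π σ₁) (κ σ₁) (α σ₁) (r σ₁) := by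
      have hieq := icd_param1 (π σ₁) (κ σ₁) (α σ₁) (r σ₁) s₁ e10 e11
      have hL : 0 < d2 (κ σ₁) (π σ₁) := d2_pos (fun h => nπκ σ₁ h.symm)
      have h1 : ε * icd (π σ₁) (κ σ₁) (α σ₁) (r σ₁)
          = (s₁ * (1 - s₁) * d2 (κ σ₁) (π σ₁))
            * (-(ε * orient (π σ₁) (κ σ₁) (α σ₁))) := by rw [hieq]; ring
      rw [h1]
      exact mul_pos (mul_pos (mul_pos hs₁0 (by linarith)) hL) (by linarith)
    have hDpos : ∀ u ∈ Set.Ioo t₀ σ₁, 0 < ε * icd (π u) (κ u) (α u) (r u) := by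
      refine pos_on_of_right hcD ?_ hDσ₁
      intro u hu
      have hu1 : u ∈ Set.Ioo t₀ t₁ := ⟨hu.1, lt_trans hu.2 i₁.2⟩
      have hu2 : u ∈ Set.Ioo t₂ t₃ := ⟨lt_of_le_of_lt h02 hu.1, lt_trans hu.2 hσ₁J.2⟩
      exact noz u hu1 hu2 (mul_pos (S1b u hu) (S2b u ⟨hu2.1, lt_trans hu.2 hσσ⟩))
    have hKneg : ∀ u ∈ Set.Ioo t₀ σ₁, ε * orient (π u) (κ u) (α u) < 0 := by
      intro u hu
      have hu1 : u ∈ Set.Ioo t₀ t₁ := ⟨hu.1, lt_trans hu.2 i₁.2⟩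
      have hGu : 0 < ε * orient (π u) (κ u) (r u) := S1b u hu
      have hg : orient (π u) (κ u) (r u) ≠ 0 := by
        intro h; rw [h, mul_zero] at hGu; linarith
      obtain ⟨W, uu, vv, huu, hvv, hWdef, hWid, hpen⟩ := key₁ u hu1 hg
      rw [icd_swap23] at hWid
      have hq1 : (ε * orient (π u) (κ u) (r u)) * W
          = -(ε * icd (π u) (κ u) (α u) (r u)) := by
        linear_combination ε * hWid
      have hWneg : W < 0 := by
        by_contra hge
        push_neg at hge
        nlinarith [mul_nonneg (le_of_lt hGu) hge, hDpos u hu]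
      have hq2 : (W - uu) * (ε * orient (π u) (κ u) (r u))
          = (- vv) * (ε * orient (π u) (κ u) (α u)) := by
        linear_combination ε * hpen
      by_contra hge
      push_neg at hge
      nlinarith [mul_neg_of_neg_of_pos (show W - uu < 0 by linarith) hGu,
        mul_nonneg (show (0:ℝ) ≤ -vv by linarith) hge]
    have hKt₀ : ε * orient (π t₀) (κ t₀) (α t₀) ≤ 0 :=
      le_left_endpoint hcK i₁.1 (fun t ht => le_of_lt (hKneg t ht))
    have hDt₀ : 0 ≤ ε * icd (π t₀) (κ t₀) (α t₀) (r t₀) := by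
      have := le_left_endpoint (f := fun t => -(ε * icd (π t) (κ t) (α t) (r t)))
        hcD.neg i₁.1 (fun t ht => by simp only [neg_nonpos]; linarith [hDpos t ht])
      simpa using this
    have hcG : Continuous fun t => ε * orient (π t) (κ t) (r t) :=
      continuous_const.mul (cont_orient hcπ hcκ hcr)
    have hGt₀ : 0 ≤ ε * orient (π t₀) (κ t₀) (r t₀) := by
      have := le_left_endpoint (f := fun t => -(ε * orient (π t) (κ t) (r t)))
        hcG.neg i₁.1 (fun t ht => by simp only [neg_nonpos]; linarith [S1b t ht])
      simpa using this
    by_cases hG0 : orient (π t₀) (κ t₀) (r t₀) = 0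
    · -- degenerate: π, κ, r collinear at t₀ forces π, κ, α, r collinear : contra
      obtain ⟨s, f0, f1⟩ := orient_param (nπκ t₀) hG0
      have hsout : 0 < s * (s - 1) := by
        by_cases hs : 0 ≤ s ∧ s ≤ 1
        · exfalso
          have hseg : r t₀ ∈ segment ℝ (π t₀) (κ t₀) := seg_of_param s hs.1 hs.2 f0 f1
          have := c₁.uniq t₀ (Set.mem_Icc.2 ⟨le_rfl, le_of_lt c₁.lt01⟩) hseg
          exact absurd this (ne_of_lt i₁.1)
        · rcases not_and_or.1 hs with h | h <;> push_neg at h <;> nlinarith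
      have hieq := icd_param1 (π t₀) (κ t₀) (α t₀) (r t₀) s f0 f1
      have hL : 0 < d2 (κ t₀) (π t₀) := d2_pos (fun h => nπκ t₀ h.symm)
      have hK0 : orient (π t₀) (κ t₀) (α t₀) = 0 := by
        have h1 : ε * icd (π t₀) (κ t₀) (α t₀) (r t₀)
            = (s * (s - 1) * d2 (κ t₀) (π t₀)) * (ε * orient (π t₀) (κ t₀) (α t₀)) := by
          rw [hieq]; ring
        have h2 : ε * orient (π t₀) (κ t₀) (α t₀) = 0 := by
          nlinarith [mul_pos hsout hL]
        rcases mul_eq_zero.1 h2 with h | h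
        · exact absurd h hε0
        · exact h
      exact hn4 t₀ (collinear4 (nπκ t₀) hK0 hG0)
    · have hGlt : 0 < ε * orient (π t₀) (κ t₀) (r t₀) := by
        rcases lt_or_eq_of_le hGt₀ with h | h
        · exact h
        · exfalso
          rcases mul_eq_zero.1 h.symm with h' | h'
          · exact absurd h' hε0
          · exact absurd h' hG0
      obtain ⟨o₀, ρ₀2, hρ₀, hπo₀, hκo₀, hemp₀⟩ := delaunay_d2 c₁.del0 (nπκ t₀)
      have hF₀r : ρ₀2 ≤ d2 (r t₀) o₀ := hemp₀ r hrP
      have hF₀α : ρ₀2 ≤ d2 (α t₀) o₀ := hemp₀ α hαP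
      have hWid := cc_pow (π t₀) (κ t₀) (r t₀) (α t₀) hG0
      rw [icd_swap23] at hWid
      have hpen₀ := pencil (π t₀) (κ t₀) (α t₀) (r t₀) (cc (π t₀) (κ t₀) (r t₀)) o₀
        (rad2 (π t₀) (κ t₀) (r t₀)) ρ₀2 (cc_p _ _ _) (cc_q _ _ _ hG0) hπo₀ hκo₀
      rw [cc_r _ _ _ hG0] at hpen₀
      rcases lt_or_eq_of_le hDt₀ with hD | hD
      · -- main subcase : D t₀ > 0 : immediate sign contradiction
        have hWneg : d2 (α t₀) (cc (π t₀) (κ t₀) (r t₀))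
            - rad2 (π t₀) (κ t₀) (r t₀) < 0 := by
          have hq1 : (ε * orient (π t₀) (κ t₀) (r t₀))
              * (d2 (α t₀) (cc (π t₀) (κ t₀) (r t₀)) - rad2 (π t₀) (κ t₀) (r t₀))
              = -(ε * icd (π t₀) (κ t₀) (α t₀) (r t₀)) := by
            linear_combination ε * hWid
          by_contra hge
          push_neg at hge
          nlinarith [mul_nonneg (le_of_lt hGlt) hge]
        have hq2 : ((d2 (α t₀) (cc (π t₀) (κ t₀) (r t₀)) - rad2 (π t₀) (κ t₀) (r t₀))
              - (d2 (α t₀) o₀ - ρ₀2)) * (ε * orient (π t₀) (κ t₀) (r t₀))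
            = (0 - (d2 (r t₀) o₀ - ρ₀2)) * (ε * orient (π t₀) (κ t₀) (α t₀)) := by
          linear_combination ε * hpen₀
        nlinarith [mul_neg_of_neg_of_pos
          (show (d2 (α t₀) (cc (π t₀) (κ t₀) (r t₀)) - rad2 (π t₀) (κ t₀) (r t₀))
              - (d2 (α t₀) o₀ - ρ₀2) < 0 by nlinarith) hGlt,
          mul_nonneg (mul_nonneg (show (0:ℝ) ≤ 1 by norm_num)
            (show (0:ℝ) ≤ d2 (r t₀) o₀ - ρ₀2 by linarith)) (neg_nonneg.2 hKt₀)]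
      · -- D t₀ = 0 : all four points on the sphere of the Delaunay witness at t₀
        have hicd₀ : icd (π t₀) (κ t₀) (α t₀) (r t₀) = 0 := by
          rcases mul_eq_zero.1 hD.symm with h | h
          · exact absurd h hε0
          · exact h
        have hW0 : d2 (α t₀) (cc (π t₀) (κ t₀) (r t₀)) = rad2 (π t₀) (κ t₀) (r t₀) := by
          have := hWid
          rw [hicd₀] at this
          have h2 : orient (π t₀) (κ t₀) (r t₀)
              * (d2 (α t₀) (cc (π t₀) (κ t₀) (r t₀)) - rad2 (π t₀) (κ t₀) (r t₀)) = 0 := by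
            linarith [this]
          rcases mul_eq_zero.1 h2 with h | h
          · exact absurd h hG0
          · linarith
        have hKne : orient (π t₀) (κ t₀) (α t₀) ≠ 0 := by
          intro hK0
          exact chord_contra hG0 hK0 hW0
            (fun h => nπα t₀ h.symm) (fun h => nκα t₀ h.symm) (nπκ t₀)
        have hKlt : ε * orient (π t₀) (κ t₀) (α t₀) < 0 := by
          rcases lt_or_eq_of_le hKt₀ with h | h
          · exact h
          · exfalso
            rcases mul_eq_zero.1 h with h' | h'
            · exact absurd h' hε0
            · exact absurd h' hKne
        have hpen₀' : (0 - (d2 (α t₀) o₀ - ρ₀2)) * (ε * orient (π t₀) (κ t₀) (r t₀))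
            = (0 - (d2 (r t₀) o₀ - ρ₀2)) * (ε * orient (π t₀) (κ t₀) (α t₀)) := by
          have := hpen₀
          rw [hW0] at this
          linear_combination ε * this
        have hprod1 : 0 ≤ (d2 (α t₀) o₀ - ρ₀2) * (ε * orient (π t₀) (κ t₀) (r t₀)) :=
          mul_nonneg (by linarith) (le_of_lt hGlt)
        have hprod2 : 0 ≤ (d2 (r t₀) o₀ - ρ₀2) * (-(ε * orient (π t₀) (κ t₀) (α t₀))) :=
          mul_nonneg (by linarith) (by linarith)
        have he : (d2 (α t₀) o₀ - ρ₀2) * (ε * orient (π t₀) (κ t₀) (r t₀))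
            = -((d2 (r t₀) o₀ - ρ₀2) * (-(ε * orient (π t₀) (κ t₀) (α t₀)))) := by
          linear_combination -hpen₀'
        have h0a : (d2 (α t₀) o₀ - ρ₀2) * (ε * orient (π t₀) (κ t₀) (r t₀)) = 0 := by
          linarith
        have h0r : (d2 (r t₀) o₀ - ρ₀2) * (-(ε * orient (π t₀) (κ t₀) (α t₀))) = 0 := by
          linarith
        have hαo₀ : d2 (α t₀) o₀ = ρ₀2 := by
          rcases mul_eq_zero.1 h0a with h | h
          · linarith
          · exact absurd h (ne_of_gt hGlt)
        have hro₀ : d2 (r t₀) o₀ = ρ₀2 := by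
          rcases mul_eq_zero.1 h0r with h | h
          · linarith
          · exact absurd h (by intro hc; linarith)
        have hHt₀ne : orient (π t₀) (α t₀) (r t₀) ≠ 0 := by
          intro hH0
          obtain ⟨τ, g0, g1⟩ := orient_param (nπα t₀) hH0
          have hch := chord hπo₀ hαo₀ g0 g1
          rw [hro₀] at hch
          have hap : 0 < d2 (α t₀) (π t₀) := d2_pos (fun h => nπα t₀ h.symm)
          have hττ : τ * (τ - 1) = 0 := by
            rcases mul_eq_zero.1 (by linarith : τ * (τ - 1) * d2 (α t₀) (π t₀) = 0)
              with h | h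
            · exact h
            · exact absurd h (ne_of_gt hap)
          rcases mul_eq_zero.1 hττ with h | h
          · exact rπ t₀ (plane_ext (by rw [g0, h]; ring) (by rw [g1, h]; ring))
          · have hτ1 : τ = 1 := by linarith
            exact rα t₀ (plane_ext (by rw [g0, hτ1]; ring) (by rw [g1, hτ1]; ring))
        have hev := eventually_outside P hcont (e1 := π) (e2 := α) (e3 := r) (e4 := κ)
          hcπ hcα hcr hρ₀ hπo₀ hαo₀ hro₀ hκo₀ hemp₀
          (fun x hx h1 h2 h3 h4 => by
            intro ⟨o', ρ', hρ', d1, d2', d3, d4, d5⟩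
            exact hn5 t₀ x hx h1 h4 h2 h3 ⟨o', ρ', hρ', d1, d4, d2', d3, d5⟩) hHt₀ne
        obtain ⟨t, ht, hout⟩ := exists_near_right i₁.1 hev
        have htJ : t ∈ Set.Ioo t₂ t₃ :=
          ⟨lt_of_le_of_lt h02 ht.1, lt_trans (lt_trans ht.2 hσσ) i₂.2⟩
        have hHt : 0 < ε * orient (π t) (α t) (r t) := S2b t ⟨htJ.1, lt_trans ht.2 hσσ⟩
        have hHtne : orient (π t) (α t) (r t) ≠ 0 := by
          intro h; rw [h, mul_zero] at hHt; linarith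
        apply c₂.ndel t htJ
        refine delaunay_mk (cc (π t) (α t) (r t)) (rad2 (π t) (α t) (r t))
          (by rw [rad2]; exact d2_nonneg _ _) (cc_p _ _ _) (cc_q _ _ _ hHtne) ?_
        intro x hxP
        by_cases hx1 : x = π
        · subst hx1; rw [cc_p]; exact lt_irrefl _
        by_cases hx2 : x = α
        · subst hx2; rw [cc_q _ _ _ hHtne]; exact lt_irrefl _
        by_cases hx3 : x = r
        · subst hx3; rw [cc_r _ _ _ hHtne]; exact lt_irrefl _
        by_cases hx4 : x = κ
        · intro hlt
          rw [hx4] at hlt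
          have hid := cc_pow (π t) (α t) (r t) (κ t) hHtne
          rw [icd_cyc] at hid
          have hq4 : (ε * orient (π t) (α t) (r t))
              * (d2 (κ t) (cc (π t) (α t) (r t)) - rad2 (π t) (α t) (r t))
              = ε * icd (π t) (κ t) (α t) (r t) := by
            linear_combination ε * hid
          nlinarith [hDpos t ht, mul_pos hHt
            (show (0:ℝ) < rad2 (π t) (α t) (r t) - d2 (κ t) (cc (π t) (α t) (r t))
              by linarith)]
        · intro hlt
          have hψ := hout x hxP hx1 hx2 hx3 hx4
          have hid := cc_pow (π t) (α t) (r t) (x t) hHtne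
          have hq5 : orient (π t) (α t) (r t) * icd (π t) (α t) (r t) (x t)
              = orient (π t) (α t) (r t) ^ 2
                * (d2 (x t) (cc (π t) (α t) (r t)) - rad2 (π t) (α t) (r t)) := by
            rw [← hid]; ring
          nlinarith [mul_nonneg (sq_nonneg (orient (π t) (α t) (r t)))
            (show (0:ℝ) ≤ rad2 (π t) (α t) (r t) - d2 (x t) (cc (π t) (α t) (r t))
              by linarith)]
  exact ⟨hA, hB⟩


end S6

/-- (Lemma 4.6 of the paper.) If `(pq, r, I)` and `(pa, r, J)` are
clockwise `(p,r)`-crossings and `r` hits `pq` before it hits `pa`, then `I` begins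
before `J` begins and `I` ends before `J` ends; and the analogous statement for pairs
of counterclockwise crossings of edges sharing their second endpoint. -/
theorem statement6 (s c : ℕ) (P : Finset Traj)
    (hP : GenPos P) (hs : CocircBound P s) (hc : CollinBound P c) :
    (∀ (p q a r : Traj) (t₀ t₁ t₂ t₃ : ℝ), q ≠ a →
      SingleCrossing P p q r t₀ t₁ → SingleCrossing P p a r t₂ t₃ →
      (∀ tq ∈ Set.Icc t₀ t₁, ∀ ta ∈ Set.Icc t₂ t₃,
        r tq ∈ segment ℝ (p tq) (q tq) → r ta ∈ segment ℝ (p ta) (a ta) → tq < ta) →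
      t₀ < t₂ ∧ t₁ < t₃) ∧
    (∀ (p p' q r : Traj) (t₀ t₁ t₂ t₃ : ℝ), p ≠ p' →
      SingleCrossing P p q r t₀ t₁ → SingleCrossing P p' q r t₂ t₃ →
      (∀ tq ∈ Set.Icc t₀ t₁, ∀ ta ∈ Set.Icc t₂ t₃,
        r tq ∈ segment ℝ (p tq) (q tq) → r ta ∈ segment ℝ (p' ta) (q ta) → tq < ta) →
      t₀ < t₂ ∧ t₁ < t₃) := by
  obtain ⟨hcont, hnc, hn5, hn4, _, _, _, _, _⟩ := hP
  constructor
  · -- edges sharing their first endpoint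
    intro p q a r t₀ t₁ t₂ t₃ hqa hc1 hc2 horder
    obtain ⟨σ₁, hσ₁Icc, hσ₁seg⟩ := hc1.crossing.hits
    obtain ⟨σ₂, hσ₂Icc, hσ₂seg⟩ := hc2.crossing.hits
    have hσσ : σ₁ < σ₂ := horder σ₁ hσ₁Icc σ₂ hσ₂Icc hσ₁seg hσ₂seg
    obtain ⟨hpq, hpr, hqr⟩ := hc1.crossing.distinct
    obtain ⟨hpa, _, har⟩ := hc2.crossing.distinct
    have hpP := hc1.crossing.mem_p
    have hqP := hc1.crossing.mem_q
    have haP := hc2.crossing.mem_q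
    have hrP := hc1.crossing.mem_r
    have c₁ : S6.Cross P 1 p q r t₀ t₁ σ₁ := by
      refine ⟨hc1.crossing.lt, hc1.crossing.del_start, hc1.crossing.del_end,
        hc1.crossing.not_del, hc1.crossing.del_erase, hσ₁Icc, hσ₁seg,
        (fun t ht hseg => hc1.unique_hit t ht σ₁ hσ₁Icc hseg hσ₁seg), ?_⟩
      obtain ⟨_, δ, hδ, hbef, haft⟩ := hc1.dir σ₁ hσ₁Icc hσ₁seg
      refine ⟨δ, hδ, fun u hu => ?_, fun u hu => ?_⟩
      · have := hbef u hu; simp only [leftOf] at this; linarith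
      · have := haft u hu; simp only [rightOf] at this; linarith
    have c₂ : S6.Cross P 1 p a r t₂ t₃ σ₂ := by
      refine ⟨hc2.crossing.lt, hc2.crossing.del_start, hc2.crossing.del_end,
        hc2.crossing.not_del, hc2.crossing.del_erase, hσ₂Icc, hσ₂seg,
        (fun t ht hseg => hc2.unique_hit t ht σ₂ hσ₂Icc hseg hσ₂seg), ?_⟩
      obtain ⟨_, δ, hδ, hbef, haft⟩ := hc2.dir σ₂ hσ₂Icc hσ₂seg
      refine ⟨δ, hδ, fun u hu => ?_, fun u hu => ?_⟩
      · have := hbef u hu; simp only [leftOf] at this; linarith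
      · have := haft u hu; simp only [rightOf] at this; linarith
    exact S6.master P 1 (Or.inl rfl) p q a r hcont hpP hqP haP hrP hnc
      (fun t => hn4 t p hpP q hqP a haP r hrP ⟨hpq, hpa, hpr, hqa, hqr, har⟩)
      (fun t x hxP hx1 hx2 hx3 hx4 =>
        hn5 t p hpP q hqP a haP r hrP x hxP ⟨hpq, hpa, hpr, hqa, hqr, har⟩
          (Ne.symm hx1) (Ne.symm hx2) (Ne.symm hx3) (Ne.symm hx4))
      hpq hpa hpr hqa hqr har c₁ c₂ hσσ
  · -- edges sharing their second endpoint
    intro p p' q r t₀ t₁ t₂ t₃ hpp' hc1 hc2 horder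
    obtain ⟨σ₁, hσ₁Icc, hσ₁seg⟩ := hc1.crossing.hits
    obtain ⟨σ₂, hσ₂Icc, hσ₂seg⟩ := hc2.crossing.hits
    have hσσ : σ₁ < σ₂ := horder σ₁ hσ₁Icc σ₂ hσ₂Icc hσ₁seg hσ₂seg
    obtain ⟨hpq, hpr, hqr⟩ := hc1.crossing.distinct
    obtain ⟨hp'q, hp'r, _⟩ := hc2.crossing.distinct
    have hpP := hc1.crossing.mem_p
    have hqP := hc1.crossing.mem_q
    have hp'P := hc2.crossing.mem_p
    have hrP := hc1.crossing.mem_r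
    have c₁ : S6.Cross P (-1) q p r t₀ t₁ σ₁ := by
      refine ⟨hc1.crossing.lt, S6.delaunay_symm hc1.crossing.del_start,
        S6.delaunay_symm hc1.crossing.del_end,
        (fun t ht hd => hc1.crossing.not_del t ht (S6.delaunay_symm hd)),
        (fun t ht => S6.delaunay_symm (hc1.crossing.del_erase t ht)),
        hσ₁Icc, by rw [segment_symm]; exact hσ₁seg,
        (fun t ht hseg => hc1.unique_hit t ht σ₁ hσ₁Icc
          (by rw [segment_symm] at hseg; exact hseg) hσ₁seg), ?_⟩
      obtain ⟨_, δ, hδ, hbef, haft⟩ := hc1.dir σ₁ hσ₁Icc hσ₁seg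
      refine ⟨δ, hδ, fun u hu => ?_, fun u hu => ?_⟩
      · have h1 := hbef u hu; simp only [leftOf] at h1
        have h2 := S6.orient_flip (p u) (q u) (r u); linarith
      · have h1 := haft u hu; simp only [rightOf] at h1
        have h2 := S6.orient_flip (p u) (q u) (r u); linarith
    have c₂ : S6.Cross P (-1) q p' r t₂ t₃ σ₂ := by
      refine ⟨hc2.crossing.lt, S6.delaunay_symm hc2.crossing.del_start,
        S6.delaunay_symm hc2.crossing.del_end,
        (fun t ht hd => hc2.crossing.not_del t ht (S6.delaunay_symm hd)),
        (fun t ht => S6.delaunay_symm (hc2.crossing.del_erase t ht)),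
        hσ₂Icc, by rw [segment_symm]; exact hσ₂seg,
        (fun t ht hseg => hc2.unique_hit t ht σ₂ hσ₂Icc
          (by rw [segment_symm] at hseg; exact hseg) hσ₂seg), ?_⟩
      obtain ⟨_, δ, hδ, hbef, haft⟩ := hc2.dir σ₂ hσ₂Icc hσ₂seg
      refine ⟨δ, hδ, fun u hu => ?_, fun u hu => ?_⟩
      · have h1 := hbef u hu; simp only [leftOf] at h1
        have h2 := S6.orient_flip (p' u) (q u) (r u); linarith
      · have h1 := haft u hu; simp only [rightOf] at h1
        have h2 := S6.orient_flip (p' u) (q u) (r u); linarith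
    exact S6.master P (-1) (Or.inr rfl) q p p' r hcont hqP hpP hp'P hrP hnc
      (fun t => hn4 t q hqP p hpP p' hp'P r hrP
        ⟨Ne.symm hpq, Ne.symm hp'q, hqr, hpp', hpr, hp'r⟩)
      (fun t x hxP hx1 hx2 hx3 hx4 =>
        hn5 t q hqP p hpP p' hp'P r hrP x hxP
          ⟨Ne.symm hpq, Ne.symm hp'q, hqr, hpp', hpr, hp'r⟩
          (Ne.symm hx1) (Ne.symm hx2) (Ne.symm hx3) (Ne.symm hx4))
      (Ne.symm hpq) (Ne.symm hp'q) hqr hpp' hpr hp'r c₁ c₂ hσσ
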